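/- arXiv:2106.13104 — 9 statements merged into one kernel-verified Lean document; each statement's English description precedes it below -/
import Mathlib

section
/- For every r ≥ 1 and pairwise distinct real (or rational function) variables x_1,…,x_r, y_1,…,y_r with all denominators nonzero, the identity ∑_{i=1}^r x_i + ∑_{j=1}^r y_j + r = ∑_{t=1}^r x_t ∏_{k≠t} (x_k − x_t + 1)/(x_k − x_t) · ∏_{l=1}^r (x_t + y_l + 1)/(x_t + y_l) + ∑_{m=1}^r y_m ∏_{k≠m} (y_k − y_m + 1)/(y_k − y_m) · ∏_{l=1}^r (x_l + y_m + 1)/(x_l + y_m) holds. -/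
open Finset Polynomial

section esymmHelpers

variable {F : Type*} [CommRing F]

lemma my_esymm_zero (s : Multiset F) : s.esymm 0 = 1 := by
  simp [Multiset.esymm, Multiset.powersetCard_zero_left]

lemma my_esymm_one (s : Multiset F) : s.esymm 1 = s.sum := by
  rw [Multiset.esymm, Multiset.powersetCard_one, Multiset.map_map]
  simp [Function.comp_def]

lemma my_esymm_cons (a : F) (s : Multiset F) (n : ℕ) :
    (a ::ₘ s).esymm (n + 1) = s.esymm (n + 1) + a * s.esymm n := by
  rw [Multiset.esymm, Multiset.powersetCard_cons, Multiset.map_add, Multiset.sum_add,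
    Multiset.map_map]
  congr 1
  rw [Multiset.esymm]
  rw [show ((Multiset.powersetCard n s).map (Multiset.prod ∘ (a ::ₘ ·))) =
      (Multiset.powersetCard n s).map (fun t => a * t.prod) from
    Multiset.map_congr rfl (fun t _ => by simp [Multiset.prod_cons])]
  rw [← Multiset.sum_map_mul_left]

lemma my_two_esymm_two (s : Multiset F) :
    2 * s.esymm 2 = s.sum ^ 2 - (s.map (· ^ 2)).sum := by
  induction s using Multiset.induction with
  | empty => simp [Multiset.esymm, Multiset.powersetCard_eq_empty 2 (s := (0 : Multiset F)) (by simp)]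
  | cons a s ih =>
      rw [show (2 : ℕ) = 1 + 1 from rfl, my_esymm_cons, my_esymm_one, Multiset.sum_cons,
        Multiset.map_cons, Multiset.sum_cons]
      rw [show (1 + 1 : ℕ) = 2 from rfl] at *
      linear_combination ih

end esymmHelpers

theorem key_lemma {F : Type*} [Field F] [CharZero F] {ι : Type*} [Fintype ι] [DecidableEq ι]
    (p q : ι → F) (hp : Function.Injective p) (hcard : 2 ≤ Fintype.card ι)
    (hsum : ∑ i, q i = ∑ i, p i) :
    ∑ i, p i * (∏ j, (p i - q j)) * ∏ j ∈ univ.erase i, (p i - p j)⁻¹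
      = ((∑ i, p i ^ 2) - ∑ i, q i ^ 2) / 2 := by
  obtain ⟨m, hm⟩ : ∃ m, Fintype.card ι = m + 2 := ⟨Fintype.card ι - 2, by omega⟩
  set D : F[X] := ∏ i, (X - C (p i)) with hDdef
  set N : F[X] := ∏ i, (X - C (q i)) with hNdef
  set sp : Multiset F := Finset.univ.val.map p with hspdef
  set sq : Multiset F := Finset.univ.val.map q with hsqdef
  have hcardval : Multiset.card (Finset.univ : Finset ι).val = m + 2 := by
    rw [← Finset.card_def, Finset.card_univ, hm]
  have hsp_card : Multiset.card sp = m + 2 := by rw [hspdef, Multiset.card_map, hcardval]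
  have hsq_card : Multiset.card sq = m + 2 := by rw [hsqdef, Multiset.card_map, hcardval]
  have hD : D = (sp.map fun t => X - C t).prod := by
    rw [hDdef, Finset.prod_eq_multiset_prod, hspdef, Multiset.map_map]; rfl
  have hN : N = (sq.map fun t => X - C t).prod := by
    rw [hNdef, Finset.prod_eq_multiset_prod, hsqdef, Multiset.map_map]; rfl
  have hsp_sum : sp.sum = ∑ i, p i := by rw [hspdef, Finset.sum_eq_multiset_sum]
  have hsq_sum : sq.sum = ∑ i, q i := by rw [hsqdef, Finset.sum_eq_multiset_sum]
  have hsp_sq : (sp.map (· ^ 2)).sum = ∑ i, p i ^ 2 := by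
    rw [hspdef, Multiset.map_map, Finset.sum_eq_multiset_sum]; rfl
  have hsq_sq : (sq.map (· ^ 2)).sum = ∑ i, q i ^ 2 := by
    rw [hsqdef, Multiset.map_map, Finset.sum_eq_multiset_sum]; rfl
  have hDc : ∀ k, k ≤ m + 2 → D.coeff k = (-1) ^ (m + 2 - k) * sp.esymm (m + 2 - k) := by
    intro k hk
    rw [hD, Multiset.prod_X_sub_C_coeff sp (by rw [hsp_card]; exact hk), hsp_card]
  have hNc : ∀ k, k ≤ m + 2 → N.coeff k = (-1) ^ (m + 2 - k) * sq.esymm (m + 2 - k) := by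
    intro k hk
    rw [hN, Multiset.prod_X_sub_C_coeff sq (by rw [hsq_card]; exact hk), hsq_card]
  -- degree bounds
  have hDnd : D.natDegree ≤ m + 2 := by
    refine le_trans (Polynomial.natDegree_prod_le _ _) ?_
    simp [natDegree_X_sub_C, hm]
  have hNnd : N.natDegree ≤ m + 2 := by
    refine le_trans (Polynomial.natDegree_prod_le _ _) ?_
    simp [natDegree_X_sub_C, hm]
  set E : F[X] := N - D with hEdef
  have hEcoeff : ∀ k, m + 1 ≤ k → E.coeff k = 0 := by
    intro k hk
    rcases eq_or_lt_of_le hk with h | h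
    · rw [hEdef, Polynomial.coeff_sub, hDc _ (by omega), hNc _ (by omega), ← h]
      rw [show m + 2 - (m + 1) = 1 from by omega, my_esymm_one, my_esymm_one,
        hsp_sum, hsq_sum, hsum]
      ring
    rcases eq_or_lt_of_le (show m + 2 ≤ k from h) with h2 | h2
    · rw [hEdef, Polynomial.coeff_sub, hDc _ (by omega), hNc _ (by omega), ← h2]
      simp [my_esymm_zero]
    · rw [hEdef, Polynomial.coeff_sub,
        Polynomial.coeff_eq_zero_of_natDegree_lt (by omega),
        Polynomial.coeff_eq_zero_of_natDegree_lt (by omega), sub_zero]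
  set R : F[X] := X * E with hRdef
  have hRcoeff : ∀ k, m + 2 ≤ k → R.coeff k = 0 := by
    intro k hk
    obtain ⟨j, rfl⟩ : ∃ j, k = j + 1 := ⟨k - 1, by omega⟩
    rw [hRdef, Polynomial.coeff_X_mul, hEcoeff _ (by omega)]
  have hRdeg : R.degree < ((m + 2 : ℕ) : WithBot ℕ) := by
    rw [Polynomial.degree_lt_iff_coeff_zero]
    intro k hk
    exact hRcoeff k (by exact_mod_cast hk)
  have hRtop : R.coeff (m + 1) = ((∑ i, p i ^ 2) - ∑ i, q i ^ 2) / 2 := by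
    rw [hRdef, Polynomial.coeff_X_mul, hEdef, Polynomial.coeff_sub,
      hDc _ (by omega), hNc _ (by omega), show m + 2 - m = 2 from by omega]
    rw [eq_div_iff (two_ne_zero)]
    have h1 := my_two_esymm_two sp
    have h2 := my_two_esymm_two sq
    rw [hsp_sum, hsp_sq] at h1
    rw [hsq_sum, hsq_sq, hsum] at h2
    linear_combination h2 - h1
  -- Lagrange interpolation
  have hinterp : R = Lagrange.interpolate univ p fun i => R.eval (p i) :=
    Lagrange.eq_interpolate hp.injOn (by rwa [Finset.card_univ, hm])
  have hbasis : ∀ i : ι, (Lagrange.basis univ p i).coeff (m + 1)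
      = ∏ j ∈ univ.erase i, (p i - p j)⁻¹ := by
    intro i
    rw [Lagrange.basis]
    simp only [Lagrange.basisDivisor]
    rw [Finset.prod_mul_distrib, ← map_prod, Polynomial.coeff_C_mul]
    have hmon : (∏ j ∈ univ.erase i, (X - C (p j))).Monic :=
      monic_prod_of_monic _ _ fun j _ => monic_X_sub_C (p j)
    have hnd : (∏ j ∈ univ.erase i, (X - C (p j))).natDegree = m + 1 := by
      rw [Polynomial.natDegree_prod _ _ fun j _ => X_sub_C_ne_zero (p j)]
      simp [natDegree_X_sub_C, Finset.card_erase_of_mem (Finset.mem_univ i),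
        Finset.card_univ, hm]
    rw [← hnd, hmon.coeff_natDegree, mul_one]
  have heval : ∀ i : ι, R.eval (p i) = p i * ∏ j, (p i - q j) := by
    intro i
    have hD0 : D.eval (p i) = 0 := by
      rw [hDdef, Polynomial.eval_prod]
      exact Finset.prod_eq_zero (Finset.mem_univ i) (by simp)
    rw [hRdef, Polynomial.eval_mul, Polynomial.eval_X, hEdef, Polynomial.eval_sub, hD0,
      sub_zero, hNdef, Polynomial.eval_prod]
    simp
  have hc := congrArg (fun g : F[X] => g.coeff (m + 1)) hinterp
  simp only [Lagrange.interpolate_apply, Polynomial.finset_sum_coeff,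
    Polynomial.coeff_C_mul] at hc
  rw [hRtop] at hc
  rw [hc]
  exact Finset.sum_congr rfl fun i _ => by rw [hbasis i, heval i]

section eraseSplit


variable {α β : Type*} [Fintype α] [Fintype β] [DecidableEq α] [DecidableEq β]

lemma erase_univ_inl (t : α) :
    (univ : Finset (α ⊕ β)).erase (Sum.inl t) =
      ((univ.erase t).map ⟨Sum.inl, Sum.inl_injective⟩) ∪
        (univ.map ⟨Sum.inr, Sum.inr_injective⟩) := by
  ext j
  cases j <;> simp

lemma erase_univ_inr (t : β) :
    (univ : Finset (α ⊕ β)).erase (Sum.inr t) =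
      (univ.map ⟨Sum.inl, Sum.inl_injective⟩) ∪
        ((univ.erase t).map ⟨Sum.inr, Sum.inr_injective⟩) := by
  ext j
  cases j <;> simp

variable {F : Type*} [CommMonoid F]

lemma prod_erase_inl (f : α ⊕ β → F) (t : α) :
    ∏ j ∈ (univ : Finset (α ⊕ β)).erase (Sum.inl t), f j =
      (∏ k ∈ univ.erase t, f (Sum.inl k)) * ∏ l, f (Sum.inr l) := by
  rw [erase_univ_inl, Finset.prod_union (by simp [Finset.disjoint_left]),
    Finset.prod_map, Finset.prod_map]
  rfl

lemma prod_erase_inr (f : α ⊕ β → F) (t : β) :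
    ∏ j ∈ (univ : Finset (α ⊕ β)).erase (Sum.inr t), f j =
      (∏ k, f (Sum.inl k)) * ∏ l ∈ univ.erase t, f (Sum.inr l) := by
  rw [erase_univ_inr, Finset.prod_union (by simp [Finset.disjoint_left]),
    Finset.prod_map, Finset.prod_map]
  rfl

end eraseSplit

/-- **Double Sum Lemma.** -/
theorem double_sum_lemma {F : Type*} [Field F] [CharZero F] (r : ℕ) (hr : 1 ≤ r)
    (x y : Fin r → F) (hx : Function.Injective x) (hy : Function.Injective y)
    (hxy : ∀ k l, x k + y l ≠ 0) :
    (∑ i, x i) + (∑ j, y j) + (r : F) =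
      (∑ t, x t * (∏ k ∈ univ.erase t, (x k - x t + 1) / (x k - x t)) *
          ∏ l, (x t + y l + 1) / (x t + y l)) +
      ∑ m, y m * (∏ k ∈ univ.erase m, (y k - y m + 1) / (y k - y m)) *
          ∏ l, (x l + y m + 1) / (x l + y m) := by
  set p : Fin r ⊕ Fin r → F := Sum.elim x (fun j => -y j) with hpdef
  set q : Fin r ⊕ Fin r → F := Sum.elim (fun i => x i + 1) (fun j => -y j - 1) with hqdef
  have hp : Function.Injective p := by
    rintro (a | a) (b | b) h <;> simp only [hpdef, Sum.elim_inl, Sum.elim_inr] at h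
    · exact congrArg Sum.inl (hx h)
    · exact absurd (by linear_combination h) (hxy a b)
    · exact absurd (by linear_combination -h) (hxy b a)
    · exact congrArg Sum.inr (hy (neg_injective h))
  have hcard : 2 ≤ Fintype.card (Fin r ⊕ Fin r) := by
    simp only [Fintype.card_sum, Fintype.card_fin]; omega
  have hsum : ∑ i, q i = ∑ i, p i := by
    rw [Fintype.sum_sum_type, Fintype.sum_sum_type]
    simp only [hpdef, hqdef, Sum.elim_inl, Sum.elim_inr, Finset.sum_add_distrib,
      Finset.sum_sub_distrib, Finset.sum_const, Finset.card_univ, Fintype.card_fin,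
      nsmul_eq_mul, mul_one, Finset.sum_neg_distrib]
    ring
  have hkey := key_lemma p q hp hcard hsum
  have hval : ((∑ i, p i ^ 2) - ∑ i, q i ^ 2) / 2
      = -((∑ i, x i) + (∑ j, y j) + (r : F)) := by
    have hA : ∑ k, (x k + 1) ^ 2 = (∑ k, x k ^ 2) + 2 * (∑ k, x k) + (r : F) := by
      rw [Finset.sum_congr rfl (fun k _ => show (x k + 1) ^ 2 = x k ^ 2 + 2 * x k + 1 by ring)]
      simp [Finset.sum_add_distrib, ← Finset.mul_sum]
    have hB : ∑ l, (-y l - 1) ^ 2 = (∑ l, y l ^ 2) + 2 * (∑ l, y l) + (r : F) := by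
      rw [Finset.sum_congr rfl (fun l _ => show (-y l - 1) ^ 2 = y l ^ 2 + 2 * y l + 1 by ring)]
      simp [Finset.sum_add_distrib, ← Finset.mul_sum]
    have hC : ∑ l, (-y l) ^ 2 = ∑ l, y l ^ 2 :=
      Finset.sum_congr rfl (fun l _ => by ring)
    rw [Fintype.sum_sum_type, Fintype.sum_sum_type]
    simp only [hpdef, hqdef, Sum.elim_inl, Sum.elim_inr]
    rw [hA, hB, hC]
    ring
  rw [hval, Fintype.sum_sum_type] at hkey
  have hterm1 : ∀ t, p (Sum.inl t) * (∏ j, (p (Sum.inl t) - q j)) *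
      ∏ j ∈ univ.erase (Sum.inl t), (p (Sum.inl t) - p j)⁻¹
      = -(x t * (∏ k ∈ univ.erase t, (x k - x t + 1) / (x k - x t)) *
          ∏ l, (x t + y l + 1) / (x t + y l)) := by
    intro t
    have hN : ∏ j, (p (Sum.inl t) - q j)
        = -((∏ k ∈ univ.erase t, (x t - (x k + 1))) * ∏ l, (x t - (-y l - 1))) := by
      rw [Fintype.prod_sum_type]
      simp only [hpdef, hqdef, Sum.elim_inl, Sum.elim_inr]
      rw [← Finset.mul_prod_erase univ _ (Finset.mem_univ t)]
      ring
    have hE : ∏ j ∈ univ.erase (Sum.inl t), (p (Sum.inl t) - p j)⁻¹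
        = (∏ k ∈ univ.erase t, (x t - x k)⁻¹) * ∏ l, (x t + y l)⁻¹ := by
      rw [prod_erase_inl]
      simp only [hpdef, Sum.elim_inl, Sum.elim_inr, sub_neg_eq_add]
    have h1 : ∏ k ∈ univ.erase t, (x k - x t + 1) / (x k - x t)
        = ∏ k ∈ univ.erase t, (x t - (x k + 1)) * (x t - x k)⁻¹ :=
      Finset.prod_congr rfl fun k _ => by
        rw [div_eq_mul_inv, show x k - x t + 1 = -(x t - (x k + 1)) by ring,
          show x k - x t = -(x t - x k) by ring, inv_neg, neg_mul_neg]
    have h2 : ∏ l, (x t + y l + 1) / (x t + y l)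
        = ∏ l, (x t - (-y l - 1)) * (x t + y l)⁻¹ :=
      Finset.prod_congr rfl fun l _ => by
        rw [div_eq_mul_inv, show x t + y l + 1 = x t - (-y l - 1) by ring]
    rw [hN, hE, h1, h2, Finset.prod_mul_distrib, Finset.prod_mul_distrib]
    simp only [hpdef, Sum.elim_inl]
    ring
  have hterm2 : ∀ m, p (Sum.inr m) * (∏ j, (p (Sum.inr m) - q j)) *
      ∏ j ∈ univ.erase (Sum.inr m), (p (Sum.inr m) - p j)⁻¹
      = -(y m * (∏ k ∈ univ.erase m, (y k - y m + 1) / (y k - y m)) *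
          ∏ l, (x l + y m + 1) / (x l + y m)) := by
    intro m
    have hN : ∏ j, (p (Sum.inr m) - q j)
        = (∏ k, (-y m - (x k + 1))) * ∏ l ∈ univ.erase m, (y l - y m + 1) := by
      rw [Fintype.prod_sum_type]
      simp only [hpdef, hqdef, Sum.elim_inl, Sum.elim_inr]
      congr 1
      rw [Finset.prod_congr rfl (fun l _ => show -y m - (-y l - 1) = y l - y m + 1 by ring),
        ← Finset.mul_prod_erase univ _ (Finset.mem_univ m),
        show y m - y m + 1 = 1 by ring, one_mul]
    have hE : ∏ j ∈ univ.erase (Sum.inr m), (p (Sum.inr m) - p j)⁻¹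
        = (∏ k, (-y m - x k)⁻¹) * ∏ l ∈ univ.erase m, (y l - y m)⁻¹ := by
      rw [prod_erase_inr]
      simp only [hpdef, Sum.elim_inl, Sum.elim_inr]
      congr 1
      exact Finset.prod_congr rfl fun l _ => by rw [show -y m - -y l = y l - y m by ring]
    have h1 : ∏ k ∈ univ.erase m, (y k - y m + 1) / (y k - y m)
        = ∏ k ∈ univ.erase m, (y k - y m + 1) * (y k - y m)⁻¹ :=
      Finset.prod_congr rfl fun k _ => div_eq_mul_inv _ _
    have h2 : (∏ k, (-y m - (x k + 1))) * ∏ k, (-y m - x k)⁻¹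
        = ∏ l, (x l + y m + 1) / (x l + y m) := by
      rw [← Finset.prod_mul_distrib]
      exact Finset.prod_congr rfl fun k _ => by
        rw [div_eq_mul_inv, show -y m - (x k + 1) = -(x k + y m + 1) by ring,
          show -y m - x k = -(x k + y m) by ring, inv_neg, neg_mul_neg]
    rw [hN, hE, h1, Finset.prod_mul_distrib]
    simp only [hpdef, Sum.elim_inr]
    rw [← h2]
    ring
  rw [Finset.sum_congr rfl (fun t _ => hterm1 t), Finset.sum_congr rfl (fun m _ => hterm2 m),
    Finset.sum_neg_distrib, Finset.sum_neg_distrib] at hkey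
  linear_combination hkey
end

section
/- For every positive integer r and pairwise distinct variables x_1,…,x_r such that x_j + x_l ≠ 1 for all j ≠ l, the identity x_1 + ⋯ + x_r = ∑_{l=1}^r x_l ∏_{j≠l} ((x_j − x_l + 1)(x_j + x_l)) / ((x_j − x_l)(x_j + x_l − 1)) holds. -/
open Finset Polynomial

/-- **Sum Lemma.** -/
theorem sum_lemma {F : Type*} [Field F] [CharZero F] (r : ℕ) (hr : 0 < r)
    (x : Fin r → F) (hx : Function.Injective x)
    (h1 : ∀ j l, j ≠ l → x j + x l ≠ 1) :
    ∑ i, x i = ∑ l, x l * ∏ j ∈ univ.erase l,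
      ((x j - x l + 1) * (x j + x l)) / ((x j - x l) * (x j + x l - 1)) := by
  classical
  set u : Fin r → F := fun i => x i ^ 2 + x i with hu
  set v : Fin r → F := fun i => x i ^ 2 - x i with hv
  have hvne : ∀ j l : Fin r, j ≠ l → v j - v l ≠ 0 := by
    intro j l hjl
    have h2 : x j - x l ≠ 0 := sub_ne_zero.mpr fun h => hjl (hx h)
    have h3 : x j + x l - 1 ≠ 0 := sub_ne_zero.mpr (h1 j l hjl)
    have hfac : v j - v l = (x j - x l) * (x j + x l - 1) := by simp only [hv]; ring
    rw [hfac]; exact mul_ne_zero h2 h3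
  have hvinj : Set.InjOn v (univ : Finset (Fin r)) := by
    intro a _ b _ hab
    by_contra hne
    exact hvne a b hne (sub_eq_zero.mpr hab)
  have hcard : (univ : Finset (Fin r)).card = r := by simp
  set Pu : Polynomial F := ∏ j, (X - C (u j)) with hPu
  set Pv : Polynomial F := ∏ j, (X - C (v j)) with hPv
  set S : Polynomial F := Pu - Pv with hS
  have hmu : Pu.Monic := monic_prod_of_monic _ _ fun i _ => monic_X_sub_C _
  have hmv : Pv.Monic := monic_prod_of_monic _ _ fun i _ => monic_X_sub_C _
  have hdu : Pu.natDegree = r := by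
    rw [hPu, natDegree_prod_of_monic _ _ fun i _ => monic_X_sub_C _]
    simp
  have hdv : Pv.natDegree = r := by
    rw [hPv, natDegree_prod_of_monic _ _ fun i _ => monic_X_sub_C _]
    simp
  have hdegS : S.degree < (r : WithBot ℕ) := by
    have h : S.degree < Pu.degree := degree_sub_lt
      (by rw [degree_eq_natDegree hmu.ne_zero, degree_eq_natDegree hmv.ne_zero, hdu, hdv])
      hmu.ne_zero (by rw [hmu.leadingCoeff, hmv.leadingCoeff])
    rwa [degree_eq_natDegree hmu.ne_zero, hdu] at h
  -- coefficient computation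
  have hcoeff : S.coeff (r - 1) = -(2 * ∑ i, x i) := by
    have hu' := prod_X_sub_C_coeff_card_pred (univ : Finset (Fin r)) u (by simpa using hr)
    have hv' := prod_X_sub_C_coeff_card_pred (univ : Finset (Fin r)) v (by simpa using hr)
    rw [hcard] at hu' hv'
    have h2 : (∑ i, u i) - ∑ i, v i = 2 * ∑ i, x i := by
      rw [← sum_sub_distrib, mul_sum]
      exact sum_congr rfl fun i _ => by simp only [hu, hv]; ring
    rw [hS, coeff_sub, hu', hv']
    linear_combination -h2
  -- coefficient of basis polynomials
  have hbasis : ∀ i : Fin r, (Lagrange.basis univ v i).coeff (r - 1)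
      = ∏ j ∈ univ.erase i, (v i - v j)⁻¹ := by
    intro i
    have hsplit : Lagrange.basis univ v i
        = C (∏ j ∈ univ.erase i, (v i - v j)⁻¹) * ∏ j ∈ univ.erase i, (X - C (v j)) := by
      rw [Lagrange.basis]
      simp_rw [Lagrange.basisDivisor]
      rw [prod_mul_distrib, map_prod]
    have hM : (∏ j ∈ univ.erase i, (X - C (v j))).Monic :=
      monic_prod_of_monic _ _ fun j _ => monic_X_sub_C _
    have hMd : (∏ j ∈ univ.erase i, (X - C (v j))).natDegree = r - 1 := by
      rw [natDegree_prod_of_monic _ _ fun j _ => monic_X_sub_C _]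
      simp [card_erase_of_mem (mem_univ i)]
    rw [hsplit, coeff_C_mul, ← hMd, hM.coeff_natDegree, mul_one]
  -- S equals its interpolation
  have hinterp : S = ∑ i, C (S.eval (v i)) * Lagrange.basis univ v i := by
    have h := Lagrange.eq_interpolate hvinj (f := S) (by rwa [hcard])
    rw [Lagrange.interpolate_apply] at h
    exact h
  have hsum : -(2 * ∑ i, x i) = ∑ i, S.eval (v i) * ∏ j ∈ univ.erase i, (v i - v j)⁻¹ := by
    rw [← hcoeff]
    conv_lhs => rw [hinterp]
    rw [finset_sum_coeff]
    exact sum_congr rfl fun i _ => by rw [coeff_C_mul, hbasis i]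
  -- evaluation of S at the nodes
  have heval : ∀ l : Fin r, S.eval (v l) = (-2 * x l) * ∏ j ∈ univ.erase l, (v l - u j) := by
    intro l
    have h0 : Pv.eval (v l) = 0 := by
      rw [hPv, eval_prod]
      exact prod_eq_zero (mem_univ l) (by simp)
    have h1' : Pu.eval (v l) = (v l - u l) * ∏ j ∈ univ.erase l, (v l - u j) := by
      rw [hPu, eval_prod]
      simp only [eval_sub, eval_X, eval_C]
      exact (mul_prod_erase univ _ (mem_univ l)).symm
    have h2' : v l - u l = -2 * x l := by simp only [hu, hv]; ring
    rw [hS, eval_sub, h0, h1', h2', sub_zero]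
  -- per-term identification
  have hterm : ∀ l : Fin r, S.eval (v l) * ∏ j ∈ univ.erase l, (v l - v j)⁻¹
      = -2 * (x l * ∏ j ∈ univ.erase l,
        ((x j - x l + 1) * (x j + x l)) / ((x j - x l) * (x j + x l - 1))) := by
    intro l
    have hfrac : ∀ j ∈ univ.erase l,
        ((x j - x l + 1) * (x j + x l)) / ((x j - x l) * (x j + x l - 1))
        = (v l - u j) * (v l - v j)⁻¹ := by
      intro j hj
      have hnum : (x j - x l + 1) * (x j + x l) = -(v l - u j) := by
        simp only [hu, hv]; ring
      have hden : (x j - x l) * (x j + x l - 1) = -(v l - v j) := by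
        simp only [hu, hv]; ring
      rw [hnum, hden, neg_div_neg_eq, div_eq_mul_inv]
    rw [heval l, prod_congr rfl hfrac, prod_mul_distrib]
    ring
  have h3 : -(2 * ∑ i, x i) = -2 * ∑ l, x l * ∏ j ∈ univ.erase l,
      ((x j - x l + 1) * (x j + x l)) / ((x j - x l) * (x j + x l - 1)) := by
    rw [hsum, mul_sum]
    exact sum_congr rfl fun l _ => hterm l
  linear_combination -h3 / 2
end

section
/- For every r ≥ 1 and variables x_1,…,x_r, y_1,…,y_r with x_i ≠ x_j and y_i ≠ y_j for i ≠ j, x_i ≠ −1, y_i ≠ −1, and x_i + y_j ≠ −2 for all i, j, the identity (∏_k x_k · ∏_k y_k)/(∏_k (x_k+1) · ∏_k (y_k+1)) = 1 − ∑_{l=1}^r 1/(x_l+1) · ∏_{k=1}^r (x_l + y_k + 1)/(x_l + y_k + 2) · ∏_{k≠l} (x_k − x_l − 1)/(x_k − x_l) − ∑_{l=1}^r 1/(y_l+1) · ∏_{k=1}^r (y_l + x_k + 1)/(y_l + x_k + 2) · ∏_{k≠l} (y_k − y_l − 1)/(y_k − y_l) holds. -/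
open Finset Polynomial

lemma dpl_coeff_eq_sum_eval {F : Type*} [Field F] {ι : Type*} [Fintype ι] [DecidableEq ι]
    (v : ι → F) (hv : Function.Injective v) (Q : F[X])
    (hQ : Q.degree < Fintype.card ι) :
    Q.coeff (Fintype.card ι - 1) =
      ∑ i, Q.eval (v i) * ∏ j ∈ univ.erase i, (v i - v j)⁻¹ := by
  have h := Lagrange.eq_interpolate (v := v) (s := univ) hv.injOn (by simpa using hQ)
  conv_lhs => rw [h]
  rw [Lagrange.interpolate_apply, finset_sum_coeff]
  refine sum_congr rfl fun i _ => ?_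
  rw [coeff_C_mul]
  congr 1
  have hb : (Lagrange.basis univ v i).natDegree = Fintype.card ι - 1 := by
    simpa using Lagrange.natDegree_basis hv.injOn (mem_univ i)
  rw [show Fintype.card ι - 1 = (Lagrange.basis univ v i).natDegree from hb.symm,
    ← Polynomial.leadingCoeff, Lagrange.basis, Polynomial.leadingCoeff_prod]
  refine prod_congr rfl fun j hj => ?_
  rw [Lagrange.basisDivisor, leadingCoeff_mul, leadingCoeff_C,
    (monic_X_sub_C (v j)).leadingCoeff, mul_one]

lemma dpl_prod_erase_ite {M : Type*} [CommMonoid M] {ι : Type*} [Fintype ι] [DecidableEq ι]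
    (g : ι → M) (i : ι) :
    ∏ j ∈ univ.erase i, g j = ∏ j, if j = i then 1 else g j := by
  rw [← Finset.mul_prod_erase univ (fun j => if j = i then 1 else g j) (mem_univ i),
    if_pos rfl, one_mul]
  exact prod_congr rfl fun j hj => by rw [if_neg (mem_erase.mp hj).1]

/-- **Double Product Lemma.** -/
theorem double_product_lemma {F : Type*} [Field F] [CharZero F] (r : ℕ) (hr : 1 ≤ r)
    (x y : Fin r → F) (hx : Function.Injective x) (hy : Function.Injective y)
    (hx1 : ∀ i, x i ≠ -1) (hy1 : ∀ i, y i ≠ -1)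
    (hxy : ∀ i j, x i + y j ≠ -2) :
    ((∏ k, x k) * ∏ k, y k) / ((∏ k, (x k + 1)) * ∏ k, (y k + 1)) =
      1 - (∑ l, 1 / (x l + 1) * (∏ k, (x l + y k + 1) / (x l + y k + 2)) *
            ∏ k ∈ univ.erase l, (x k - x l - 1) / (x k - x l))
        - ∑ l, 1 / (y l + 1) * (∏ k, (y l + x k + 1) / (y l + x k + 2)) *
            ∏ k ∈ univ.erase l, (y k - y l - 1) / (y k - y l) := by
  classical
  have hx0 : ∀ i, x i + 1 ≠ 0 := fun i h => hx1 i (eq_neg_of_add_eq_zero_left h)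
  have hy0 : ∀ i, y i + 1 ≠ 0 := fun i h => hy1 i (eq_neg_of_add_eq_zero_left h)
  have hxy0 : ∀ i j, x i + y j + 2 ≠ 0 := fun i j h => hxy i j (eq_neg_of_add_eq_zero_left h)
  set v : Option (Fin r ⊕ Fin r) → F :=
    fun o => Option.elim o 0 (Sum.elim (fun l => x l + 1) (fun l => -(y l + 1))) with hvdef
  have hvnone : v none = 0 := rfl
  have hvinl : ∀ l, v (some (Sum.inl l)) = x l + 1 := fun _ => rfl
  have hvinr : ∀ l, v (some (Sum.inr l)) = -(y l + 1) := fun _ => rfl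
  have hv : Function.Injective v := by
    rintro (_ | (a | a)) (_ | (b | b)) h <;>
      simp only [hvnone, hvinl, hvinr] at h
    · rfl
    · exact absurd (show x b + 1 = 0 by linear_combination -h) (hx0 b)
    · exact absurd (show y b + 1 = 0 by linear_combination h) (hy0 b)
    · exact absurd (show x a + 1 = 0 by linear_combination h) (hx0 a)
    · rw [hx (show x a = x b by linear_combination h)]
    · exact absurd (show x a + y b + 2 = 0 by linear_combination h) (hxy0 a b)
    · exact absurd (show y a + 1 = 0 by linear_combination -h) (hy0 a)
    · exact absurd (show x b + y a + 2 = 0 by linear_combination -h) (hxy0 b a)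
    · rw [hy (show y a = y b by linear_combination -h)]
  set Q : F[X] := (∏ k, (X - C (x k))) * ∏ k, (X + C (y k)) with hQdef
  have hm1 : (∏ k, (X - C (x k)) : F[X]).Monic :=
    monic_prod_of_monic _ _ fun k _ => monic_X_sub_C _
  have hm2 : (∏ k, (X + C (y k)) : F[X]).Monic :=
    monic_prod_of_monic _ _ fun k _ => monic_X_add_C _
  have hQm : Q.Monic := hm1.mul hm2
  have hQdeg : Q.natDegree = 2 * r := by
    rw [hQdef, hm1.natDegree_mul hm2,
      natDegree_prod_of_monic _ _ (fun k _ => monic_X_sub_C _),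
      natDegree_prod_of_monic _ _ (fun k _ => monic_X_add_C _)]
    simp [two_mul]
  have hcard : Fintype.card (Option (Fin r ⊕ Fin r)) = 2 * r + 1 := by
    simp [two_mul]
  have hev : ∀ t : F, Q.eval t = (∏ k, (t - x k)) * ∏ k, (t + y k) := by
    intro t
    rw [hQdef, eval_mul, eval_prod, eval_prod]
    congr 1 <;> exact prod_congr rfl fun k _ => by simp
  have hdlt : Q.degree < Fintype.card (Option (Fin r ⊕ Fin r)) := by
    rw [hcard, Polynomial.degree_eq_natDegree hQm.ne_zero, hQdeg]
    exact_mod_cast Nat.lt_succ_self _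
  have hkey := dpl_coeff_eq_sum_eval v hv Q hdlt
  rw [hcard, show 2 * r + 1 - 1 = Q.natDegree by rw [hQdeg]; omega,
    ← Polynomial.leadingCoeff, hQm.leadingCoeff] at hkey
  rw [Fintype.sum_option, Fintype.sum_sum_type] at hkey
  have h0 : Q.eval (v none) * ∏ j ∈ univ.erase (none : Option (Fin r ⊕ Fin r)),
      (v none - v j)⁻¹
      = ((∏ k, x k) * ∏ k, y k) / ((∏ k, (x k + 1)) * ∏ k, (y k + 1)) := by
    rw [hev, hvnone, dpl_prod_erase_ite, Fintype.prod_option, Fintype.prod_sum_type]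
    simp only [hvinl, hvinr, reduceCtorEq, if_false, ite_true, ite_false, one_mul, if_pos]
    calc ((∏ k : Fin r, ((0:F) - x k)) * ∏ k : Fin r, ((0:F) + y k)) *
          ((∏ k : Fin r, ((0:F) - (x k + 1))⁻¹) * ∏ k : Fin r, ((0:F) - -(y k + 1))⁻¹)
        = (∏ k : Fin r, ((0:F) - x k) * (0 - (x k + 1))⁻¹) *
            ∏ k : Fin r, ((0:F) + y k) * (0 - -(y k + 1))⁻¹ := by
          rw [prod_mul_distrib, prod_mul_distrib]; ring
      _ = (∏ k, x k * (x k + 1)⁻¹) * ∏ k, y k * (y k + 1)⁻¹ := by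
          congr 1
          · exact prod_congr rfl fun k _ => by
              rw [show (0:F) - (x k + 1) = -(x k + 1) by ring, inv_neg]; ring
          · exact prod_congr rfl fun k _ => by
              rw [show (0:F) - -(y k + 1) = y k + 1 by ring]; ring
      _ = ((∏ k, x k) * ∏ k, y k) / ((∏ k, (x k + 1)) * ∏ k, (y k + 1)) := by
          rw [prod_mul_distrib, prod_mul_distrib, prod_inv_distrib, prod_inv_distrib,
            div_eq_mul_inv, mul_inv]
          ring
  have hl : ∀ l, Q.eval (v (some (Sum.inl l))) *
      ∏ j ∈ univ.erase (some (Sum.inl l) : Option (Fin r ⊕ Fin r)),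
        (v (some (Sum.inl l)) - v j)⁻¹
      = 1 / (x l + 1) * (∏ k, (x l + y k + 1) / (x l + y k + 2)) *
          ∏ k ∈ univ.erase l, (x k - x l - 1) / (x k - x l) := by
    intro l
    rw [hvinl, hev, dpl_prod_erase_ite, Fintype.prod_option, Fintype.prod_sum_type,
      dpl_prod_erase_ite (fun k => (x k - x l - 1) / (x k - x l)) l]
    simp only [hvinl, hvinr, hvnone, Option.some.injEq, Sum.inl.injEq, reduceCtorEq,
      if_false, ite_false, one_div, div_eq_mul_inv]
    rw [show (∏ k, (x l + 1 - x k)) = ∏ k, if k = l then 1 else (x l + 1 - x k) from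
      prod_congr rfl fun k _ => by
        by_cases h : k = l
        · rw [if_pos h, h]; ring
        · rw [if_neg h]]
    trans ((x l + 1 - 0)⁻¹ * (∏ k, (x l + 1 + y k) * (x l + 1 - -(y k + 1))⁻¹) *
        ∏ k, ((if k = l then 1 else (x l + 1 - x k)) *
          if k = l then 1 else (x l + 1 - (x k + 1))⁻¹))
    · rw [prod_mul_distrib, prod_mul_distrib]; ring
    · have eA : (∏ k, (x l + 1 + y k) * (x l + 1 - -(y k + 1))⁻¹)
          = ∏ k, (x l + y k + 1) * (x l + y k + 2)⁻¹ :=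
        prod_congr rfl fun k _ => by
          rw [show x l + 1 - -(y k + 1) = x l + y k + 2 by ring]; ring
      have eB : (∏ k, ((if k = l then 1 else (x l + 1 - x k)) *
            if k = l then 1 else (x l + 1 - (x k + 1))⁻¹))
          = ∏ k, if k = l then 1 else (x k - x l - 1) * (x k - x l)⁻¹ :=
        prod_congr rfl fun k _ => by
          by_cases h : k = l
          · simp [h]
          · rw [if_neg h, if_neg h, if_neg h,
              show x l + 1 - (x k + 1) = -(x k - x l) by ring, inv_neg]; ring
      rw [eA, eB, sub_zero]; ring
  have hrr : ∀ l, Q.eval (v (some (Sum.inr l))) *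
      ∏ j ∈ univ.erase (some (Sum.inr l) : Option (Fin r ⊕ Fin r)),
        (v (some (Sum.inr l)) - v j)⁻¹
      = 1 / (y l + 1) * (∏ k, (y l + x k + 1) / (y l + x k + 2)) *
          ∏ k ∈ univ.erase l, (y k - y l - 1) / (y k - y l) := by
    intro l
    rw [hvinr, hev, dpl_prod_erase_ite, Fintype.prod_option, Fintype.prod_sum_type,
      dpl_prod_erase_ite (fun k => (y k - y l - 1) / (y k - y l)) l]
    simp only [hvinl, hvinr, hvnone, Option.some.injEq, Sum.inr.injEq, reduceCtorEq,
      if_false, ite_false, one_div, div_eq_mul_inv]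
    rw [show (∏ k, (-(y l + 1) + y k))
        = (-(y l + 1) + y l) * ∏ k, if k = l then 1 else (-(y l + 1) + y k) from by
      rw [← Finset.mul_prod_erase univ _ (mem_univ l), dpl_prod_erase_ite]]
    trans ((-(y l + 1) + y l) * (-(y l + 1) - 0)⁻¹ *
        (∏ k, (-(y l + 1) - x k) * (-(y l + 1) - (x k + 1))⁻¹) *
        ∏ k, ((if k = l then 1 else (-(y l + 1) + y k)) *
          if k = l then 1 else (-(y l + 1) - -(y k + 1))⁻¹))
    · rw [prod_mul_distrib, prod_mul_distrib]; ring
    · have eA : (∏ k, (-(y l + 1) - x k) * (-(y l + 1) - (x k + 1))⁻¹)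
          = ∏ k, (y l + x k + 1) * (y l + x k + 2)⁻¹ :=
        prod_congr rfl fun k _ => by
          rw [show -(y l + 1) - (x k + 1) = -(y l + x k + 2) by ring, inv_neg]; ring
      have eB : (∏ k, ((if k = l then 1 else (-(y l + 1) + y k)) *
            if k = l then 1 else (-(y l + 1) - -(y k + 1))⁻¹))
          = ∏ k, if k = l then 1 else (y k - y l - 1) * (y k - y l)⁻¹ :=
        prod_congr rfl fun k _ => by
          by_cases h : k = l
          · simp [h]
          · rw [if_neg h, if_neg h, if_neg h,
              show -(y l + 1) - -(y k + 1) = y k - y l by ring]; ring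
      rw [eA, eB, sub_zero, inv_neg]; ring
  rw [h0, Finset.sum_congr rfl (fun l _ => hl l), Finset.sum_congr rfl (fun l _ => hrr l)] at hkey
  linear_combination -hkey
end

section
/- For every positive integer r and pairwise distinct variables x_1,…,x_r with x_j + x_l ≠ −3 for j ≠ l, the identity x_1 ⋯ x_r = ∏_{j=1}^r (x_j + 2) − 2 ∑_{l=1}^r ∏_{j≠l} ((x_j + 2)(x_j − x_l − 1)(x_j + x_l + 2)) / ((x_j − x_l)(x_j + x_l + 3)) holds. -/
open Finset Polynomial

lemma product_lemma_core {F : Type*} [Field F] [CharZero F] {ι : Type*} [DecidableEq ι]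
    (A : Finset ι) (x : ι → F) (hx : Set.InjOn x A)
    (h3 : ∀ j ∈ A, ∀ l ∈ A, j ≠ l → x j + x l ≠ -3)
    (h1 : ∀ j ∈ A, x j ≠ -1) :
    ∏ j ∈ A, x j = (∏ j ∈ A, (x j + 2)) - 2 * ∑ l ∈ A, ∏ j ∈ A.erase l,
      ((x j + 2) * (x j - x l - 1) * (x j + x l + 2)) / ((x j - x l) * (x j + x l + 3)) := by
  classical
  set s : ι → F := fun j => (2 * x j + 3) ^ 2 with hs_def
  set c : ι → F := fun j => (2 * x j + 1) ^ 2 with hc_def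
  -- differences are nonzero
  have hd : ∀ j ∈ A, ∀ l ∈ A, j ≠ l → (x j - x l ≠ 0 ∧ x j + x l + 3 ≠ 0) := by
    intro j hj l hl hjl
    refine ⟨sub_ne_zero.mpr (fun h => hjl (hx hj hl h)), fun h => h3 j hj l hl hjl ?_⟩
    linear_combination h
  have hs_inj : Set.InjOn s A := by
    intro j hj l hl h
    by_contra hjl
    obtain ⟨d1, d2⟩ := hd j hj l hl hjl
    have : (x j - x l) * (x j + x l + 3) = 0 := by
      have : s j - s l = 0 := sub_eq_zero.mpr h
      simp only [hs_def] at this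
      linear_combination this / 4
    rcases mul_eq_zero.mp this with h' | h' <;> [exact d1 h'; exact d2 h']
  -- the polynomial
  set f : F[X] := (∏ j ∈ A, (X - C (c j))) - ∏ j ∈ A, (X - C (s j)) with hf_def
  have hmc : (∏ j ∈ A, (X - C (c j))).Monic := monic_prod_of_monic _ _ fun j _ => monic_X_sub_C _
  have hms : (∏ j ∈ A, (X - C (s j))).Monic := monic_prod_of_monic _ _ fun j _ => monic_X_sub_C _
  have hdegc : (∏ j ∈ A, (X - C (c j))).natDegree = A.card := by
    rw [natDegree_prod _ _ (fun j _ => X_sub_C_ne_zero _)]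
    simp
  have hdegs : (∏ j ∈ A, (X - C (s j))).natDegree = A.card := by
    rw [natDegree_prod _ _ (fun j _ => X_sub_C_ne_zero _)]
    simp
  have hdf : f.degree < (A.card : WithBot ℕ) := by
    rcases A.eq_empty_or_nonempty with rfl | hA
    · simp [hf_def]
    · have hcard : 0 < A.card := card_pos.mpr hA
      have hdq : (∏ j ∈ A, (X - C (c j))).degree = (∏ j ∈ A, (X - C (s j))).degree := by
        rw [Polynomial.degree_eq_natDegree hmc.ne_zero,
          Polynomial.degree_eq_natDegree hms.ne_zero, hdegc, hdegs]
      have := Polynomial.degree_sub_lt hdq hmc.ne_zero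
        (by rw [hmc.leadingCoeff, hms.leadingCoeff])
      rwa [Polynomial.degree_eq_natDegree hmc.ne_zero, hdegc] at this
  have key := Lagrange.eq_interpolate hs_inj hdf
  -- evaluate at 1
  have key1 : f.eval 1 = ∑ l ∈ A, f.eval (s l) *
      ∏ j ∈ A.erase l, ((s l - s j)⁻¹ * (1 - s j)) := by
    conv_lhs => rw [key]
    rw [Lagrange.interpolate_apply, eval_finset_sum]
    refine sum_congr rfl fun l hl => ?_
    rw [eval_mul, eval_C, Lagrange.basis, eval_prod]
    congr 1
    refine prod_congr rfl fun j hj => ?_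
    rw [Lagrange.basisDivisor, eval_mul, eval_C, eval_sub, eval_X, eval_C]
  have hevalf : ∀ t : F, f.eval t = (∏ j ∈ A, (t - c j)) - ∏ j ∈ A, (t - s j) := by
    intro t; simp [hf_def, eval_prod]
  -- rewrite both sides
  set M : F := ∏ j ∈ A, (-4 * (x j + 1)) with hM_def
  have hM : M ≠ 0 := by
    refine prod_ne_zero_iff.mpr fun j hj => ?_
    have := h1 j hj
    intro h
    rcases mul_eq_zero.mp h with h' | h'
    · norm_num at h'
    · exact this (by linear_combination h')
  have hL : f.eval 1 = M * (∏ j ∈ A, x j) - M * ∏ j ∈ A, (x j + 2) := by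
    rw [hevalf, ← prod_mul_distrib, ← prod_mul_distrib]
    congr 1 <;> refine prod_congr rfl fun j hj => ?_ <;> simp only [hs_def, hc_def] <;> ring
  have hR : ∀ l ∈ A, f.eval (s l) * ∏ j ∈ A.erase l, ((s l - s j)⁻¹ * (1 - s j))
      = -2 * M * ∏ j ∈ A.erase l,
      ((x j + 2) * (x j - x l - 1) * (x j + x l + 2)) / ((x j - x l) * (x j + x l + 3)) := by
    intro l hl
    have hzero : ∏ j ∈ A, (s l - s j) = 0 :=
      prod_eq_zero hl (by simp)
    rw [hevalf, hzero, sub_zero]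
    rw [← Finset.mul_prod_erase A (fun j => s l - c j) hl]
    rw [mul_assoc, ← prod_mul_distrib]
    have hfac : ∀ j ∈ A.erase l, (s l - c j) * ((s l - s j)⁻¹ * (1 - s j)) =
        (-4 * (x j + 1)) *
        (((x j + 2) * (x j - x l - 1) * (x j + x l + 2)) / ((x j - x l) * (x j + x l + 3))) := by
      intro j hj
      have hjA : j ∈ A := mem_of_mem_erase hj
      have hjl : j ≠ l := ne_of_mem_erase hj
      obtain ⟨d1, d2⟩ := hd j hjA l hl hjl
      have hss : s l - s j = -4 * ((x j - x l) * (x j + x l + 3)) := by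
        simp only [hs_def]; ring
      rw [hss]
      field_simp
      ring
    rw [prod_congr rfl hfac, prod_mul_distrib]
    have hMsplit : M = (-4 * (x l + 1)) * ∏ j ∈ A.erase l, (-4 * (x j + 1)) :=
      (Finset.mul_prod_erase A _ hl).symm
    have hsc : s l - c l = 8 * (x l + 1) := by simp only [hs_def, hc_def]; ring
    rw [hsc, hMsplit]
    ring
  rw [Finset.sum_congr rfl hR, ← Finset.mul_sum, hL] at key1
  have : M * (∏ j ∈ A, x j) = M * ((∏ j ∈ A, (x j + 2)) - 2 * ∑ l ∈ A, ∏ j ∈ A.erase l,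
      ((x j + 2) * (x j - x l - 1) * (x j + x l + 2)) / ((x j - x l) * (x j + x l + 3))) := by
    linear_combination key1
  exact mul_left_cancel₀ hM this

/-- **Product Lemma.** -/
theorem product_lemma {F : Type*} [Field F] [CharZero F] (r : ℕ) (hr : 0 < r)
    (x : Fin r → F) (hx : Function.Injective x)
    (h3 : ∀ j l, j ≠ l → x j + x l ≠ -3) :
    ∏ j, x j = (∏ j, (x j + 2)) - 2 * ∑ l, ∏ j ∈ univ.erase l,
      ((x j + 2) * (x j - x l - 1) * (x j + x l + 2)) / ((x j - x l) * (x j + x l + 3)) := by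
  classical
  by_cases hk : ∃ k, x k = -1
  · obtain ⟨k, hkv⟩ := hk
    set A : Finset (Fin r) := univ.erase k with hA_def
    have hA3 : ∀ j ∈ A, ∀ l ∈ A, j ≠ l → x j + x l ≠ -3 := fun j _ l _ h => h3 j l h
    have hA1 : ∀ j ∈ A, x j ≠ -1 := by
      intro j hj h
      exact (ne_of_mem_erase hj) (hx (h.trans hkv.symm))
    have hne2 : ∀ j, j ≠ k → x j ≠ -2 := by
      intro j hj h
      exact h3 j k hj (by rw [h, hkv]; norm_num)
    have hne1 : ∀ j, j ≠ k → x j ≠ -1 := by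
      intro j hj h
      exact hj (hx (h.trans hkv.symm))
    have core := product_lemma_core A x hx.injOn hA3 hA1
    -- e1, e2
    have e1 : ∏ j, x j = -∏ j ∈ A, x j := by
      rw [← Finset.mul_prod_erase univ x (mem_univ k), hkv]; ring
    have e2 : ∏ j, (x j + 2) = ∏ j ∈ A, (x j + 2) := by
      rw [← Finset.mul_prod_erase univ (fun j => x j + 2) (mem_univ k), hkv]; ring
    -- the k-th term of the sum equals ∏_{j∈A} x j
    have eTk : (∏ j ∈ univ.erase k,
        ((x j + 2) * (x j - x k - 1) * (x j + x k + 2)) / ((x j - x k) * (x j + x k + 3)))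
        = ∏ j ∈ A, x j := by
      refine prod_congr rfl fun j hj => ?_
      have hjk : j ≠ k := ne_of_mem_erase hj
      have h1j : x j + 1 ≠ 0 := fun h => hne1 j hjk (by linear_combination h)
      have h2j : x j + 2 ≠ 0 := fun h => hne2 j hjk (by linear_combination h)
      have hden : (x j - x k) * (x j + x k + 3) ≠ 0 := by
        rw [hkv]; intro h
        rcases mul_eq_zero.mp h with h' | h'
        · exact h1j (by linear_combination h')
        · exact h2j (by linear_combination h')
      rw [div_eq_iff hden, hkv]
      ring
    -- terms for l ≠ k reduce to the smaller configuration
    have eTl : ∀ l ∈ A, (∏ j ∈ univ.erase l,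
        ((x j + 2) * (x j - x l - 1) * (x j + x l + 2)) / ((x j - x l) * (x j + x l + 3)))
        = ∏ j ∈ A.erase l,
        ((x j + 2) * (x j - x l - 1) * (x j + x l + 2)) / ((x j - x l) * (x j + x l + 3)) := by
      intro l hl
      have hlk : l ≠ k := ne_of_mem_erase hl
      have hkl : k ∈ univ.erase l := mem_erase.mpr ⟨hlk.symm, mem_univ k⟩
      rw [← Finset.mul_prod_erase _ _ hkl, Finset.erase_right_comm]
      have h1l : x l + 1 ≠ 0 := fun h => hne1 l hlk (by linear_combination h)
      have h2l : x l + 2 ≠ 0 := fun h => hne2 l hlk (by linear_combination h)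
      have hden : (x k - x l) * (x k + x l + 3) ≠ 0 := by
        rw [hkv]; intro h
        rcases mul_eq_zero.mp h with h' | h'
        · exact h1l (by linear_combination -h')
        · exact h2l (by linear_combination h')
      have h1 : ((x k + 2) * (x k - x l - 1) * (x k + x l + 2)) / ((x k - x l) * (x k + x l + 3))
          = 1 := by
        rw [div_eq_one_iff_eq hden, hkv]; ring
      rw [h1, one_mul, ← hA_def]
    -- split the sum
    have e3 : (∑ l, ∏ j ∈ univ.erase l,
        ((x j + 2) * (x j - x l - 1) * (x j + x l + 2)) / ((x j - x l) * (x j + x l + 3)))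
        = (∏ j ∈ A, x j) + ∑ l ∈ A, ∏ j ∈ A.erase l,
        ((x j + 2) * (x j - x l - 1) * (x j + x l + 2)) / ((x j - x l) * (x j + x l + 3)) := by
      rw [← Finset.add_sum_erase univ _ (mem_univ k), eTk]
      exact congrArg _ (Finset.sum_congr rfl eTl)
    rw [e1, e2, e3]
    linear_combination core
  · push_neg at hk
    have core := product_lemma_core (univ : Finset (Fin r)) x hx.injOn
      (fun j _ l _ h => h3 j l h) (fun j _ => hk j)
    exact core
end

section
/- Let I = {i_1 < ⋯ < i_r} ⊂ ℕ with i_1 = 0 and i_1 > 0 not required; suppose the Lascoux polynomials satisfy the first recurrence LP_I(n) = (n − r + 1) LP_{I∖{0}}(n) − 2 ∑_{l>1, i_{l+1} > i_l + 1} LP_{I∪{i_l+1}∖{0,i_l}}(n). If for each set J appearing on the right-hand side, LP_J is a polynomial of degree |J| + ∑J with leading coefficient ∏_{j>k}(j_j − j_k)/(∏_k (j_k+1)! · ∏_{j>k}(j_j + j_k + 2)), then LP_I is a polynomial of degree |I| + ∑I with leading coefficient ∏_{j>k}(i_j − i_k)/(∏_k (i_k+1)! · ∏_{j>k}(i_j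 + i_k + 2)). -/
open Finset

/-- `f : ℕ → ℚ` eventually agrees with a polynomial of degree `d` and leading
coefficient `c`. -/
def IsPolyWithLead (f : ℕ → ℚ) (d : ℕ) (c : ℚ) : Prop :=
  ∃ p : Polynomial ℚ, (∀ᶠ n in Filter.atTop, f n = p.eval (n : ℚ)) ∧
    p.natDegree = d ∧ p.leadingCoeff = c

/-- The claimed leading coefficient of the type C Lascoux polynomial of a set `I`. -/
noncomputable def leadC (I : Finset ℕ) : ℚ :=
  (∏ p ∈ (I ×ˢ I).filter (fun p => p.2 < p.1), ((p.1 : ℚ) - (p.2 : ℚ))) /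
    ((∏ i ∈ I, (Nat.factorial (i + 1) : ℚ)) *
      ∏ p ∈ (I ×ˢ I).filter (fun p => p.2 < p.1), ((p.1 : ℚ) + (p.2 : ℚ) + 2))

lemma prod_pairs_eq (A : Finset ℕ) (f : ℕ × ℕ → ℚ) :
    ∏ p ∈ (A ×ˢ A).filter (fun p => p.2 < p.1), f p
      = ∏ x ∈ A, ∏ y ∈ A.filter (· < x), f (x, y) := by
  rw [Finset.prod_filter, Finset.prod_product]
  refine Finset.prod_congr rfl fun x _ => ?_
  rw [Finset.prod_filter]

lemma prod_pairs_insert (A : Finset ℕ) (a : ℕ) (ha : a ∉ A) (f : ℕ × ℕ → ℚ) :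
    ∏ p ∈ ((insert a A) ×ˢ (insert a A)).filter (fun p => p.2 < p.1), f p =
      (∏ y ∈ A.filter (· < a), f (a, y)) * (∏ x ∈ A.filter (a < ·), f (x, a)) *
        ∏ p ∈ (A ×ˢ A).filter (fun p => p.2 < p.1), f p := by
  rw [prod_pairs_eq, prod_pairs_eq, Finset.prod_insert ha]
  have h1 : (insert a A).filter (· < a) = A.filter (· < a) := by
    rw [Finset.filter_insert]; simp
  rw [h1]
  have h3 : ∏ x ∈ A, ∏ y ∈ (insert a A).filter (· < x), f (x, y)
      = (∏ x ∈ A.filter (a < ·), f (x, a)) * ∏ x ∈ A, ∏ y ∈ A.filter (· < x), f (x, y) := by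
    rw [← Finset.prod_filter_mul_prod_filter_not A (a < ·)
      (fun x => ∏ y ∈ (insert a A).filter (· < x), f (x, y)),
      ← Finset.prod_filter_mul_prod_filter_not A (a < ·)
      (fun x => ∏ y ∈ A.filter (· < x), f (x, y))]
    have hA1 : ∀ x ∈ A.filter (a < ·), ∏ y ∈ (insert a A).filter (· < x), f (x, y)
        = f (x, a) * ∏ y ∈ A.filter (· < x), f (x, y) := by
      intro x hx
      obtain ⟨hxA, hax⟩ := Finset.mem_filter.mp hx
      rw [Finset.filter_insert, if_pos hax, Finset.prod_insert (by simp [ha])]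
    have hA2 : ∀ x ∈ A.filter (fun x => ¬ a < x), ∏ y ∈ (insert a A).filter (· < x), f (x, y)
        = ∏ y ∈ A.filter (· < x), f (x, y) := by
      intro x hx
      obtain ⟨hxA, hax⟩ := Finset.mem_filter.mp hx
      rw [Finset.filter_insert, if_neg hax]
    rw [Finset.prod_congr rfl hA1, Finset.prod_congr rfl hA2, Finset.prod_mul_distrib]
    ring
  rw [h3]; ring

lemma prod_split_lt_gt (A : Finset ℕ) (a : ℕ) (ha : a ∉ A) (g : ℕ → ℚ) :
    (∏ b ∈ A.filter (· < a), g b) * (∏ b ∈ A.filter (a < ·), g b) = ∏ b ∈ A, g b := by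
  rw [← Finset.prod_filter_mul_prod_filter_not A (· < a)]
  congr 1
  refine Finset.prod_congr (Finset.filter_congr fun b hb => ?_) fun _ _ => rfl
  have : b ≠ a := fun h => ha (h ▸ hb)
  simp only [not_lt]
  constructor
  · intro h; omega
  · intro h; omega

noncomputable def NP (A : Finset ℕ) : ℚ :=
  ∏ p ∈ (A ×ˢ A).filter (fun p => p.2 < p.1), ((p.1 : ℚ) - (p.2 : ℚ))
noncomputable def DP (A : Finset ℕ) : ℚ :=
  ∏ p ∈ (A ×ˢ A).filter (fun p => p.2 < p.1), ((p.1 : ℚ) + (p.2 : ℚ) + 2)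
noncomputable def FP (A : Finset ℕ) : ℚ := ∏ i ∈ A, (Nat.factorial (i + 1) : ℚ)

lemma leadC_eq (A : Finset ℕ) : leadC A = NP A / (FP A * DP A) := rfl

lemma NP_pos (A : Finset ℕ) : 0 < NP A := by
  refine Finset.prod_pos fun p hp => ?_
  obtain ⟨_, h⟩ := Finset.mem_filter.mp hp
  have : (p.2 : ℚ) < p.1 := by exact_mod_cast h
  linarith

lemma DP_pos (A : Finset ℕ) : 0 < DP A := by
  refine Finset.prod_pos fun p hp => ?_
  positivity

lemma FP_pos (A : Finset ℕ) : 0 < FP A := by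
  refine Finset.prod_pos fun i _ => ?_
  exact_mod_cast Nat.factorial_pos (i + 1)

lemma leadC_pos (A : Finset ℕ) : 0 < leadC A :=
  div_pos (NP_pos A) (mul_pos (FP_pos A) (DP_pos A))

lemma NP_insert (A : Finset ℕ) (a : ℕ) (ha : a ∉ A) :
    NP (insert a A) = (∏ y ∈ A.filter (· < a), ((a : ℚ) - y)) *
      (∏ x ∈ A.filter (a < ·), ((x : ℚ) - a)) * NP A :=
  prod_pairs_insert A a ha _

lemma DP_insert (A : Finset ℕ) (a : ℕ) (ha : a ∉ A) :
    DP (insert a A) = (∏ b ∈ A, ((a : ℚ) + b + 2)) * DP A := by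
  rw [DP, prod_pairs_insert A a ha]
  have : (∏ x ∈ A.filter (a < ·), ((x : ℚ) + a + 2))
      = ∏ x ∈ A.filter (a < ·), ((a : ℚ) + x + 2) :=
    Finset.prod_congr rfl fun x _ => by ring
  rw [this, prod_split_lt_gt A a ha (fun b => (a : ℚ) + b + 2)]
  rfl

lemma FP_insert (A : Finset ℕ) (a : ℕ) (ha : a ∉ A) :
    FP (insert a A) = (Nat.factorial (a + 1) : ℚ) * FP A :=
  Finset.prod_insert ha

noncomputable def wq (i : ℕ) : ℚ := ((i : ℚ) + 1) * ((i : ℚ) + 2)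
noncomputable def vq (i : ℕ) : ℚ := (i : ℚ) * ((i : ℚ) + 1)

lemma wq_pos (i : ℕ) : 0 < wq i := by unfold wq; positivity

lemma wq_inj : Function.Injective wq := by
  have h : StrictMono wq := by
    intro i j hij
    have hij' : (i : ℚ) < j := by exact_mod_cast hij
    have h0 : (0:ℚ) ≤ i := Nat.cast_nonneg i
    unfold wq; nlinarith
  exact h.injective

lemma step_b (S : Finset ℕ) (i : ℕ) (hi : i ∈ S) (hi1 : i + 1 ∉ S) :
    leadC S * ((∏ b ∈ S, (wq i - vq b)) * (wq i)⁻¹ * ∏ b ∈ S.erase i, (wq i - wq b)⁻¹)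
      = 2 * leadC (insert (i + 1) (S.erase i)) := by
  set T := S.erase i with hT
  have hiT : i ∉ T := Finset.notMem_erase i S
  have hi1T : i + 1 ∉ T := fun h => hi1 (Finset.mem_of_mem_erase h)
  have hST : S = insert i T := (Finset.insert_erase hi).symm
  -- atoms
  set Nlt := ∏ b ∈ T.filter (· < i), ((i : ℚ) - b) with hNlt_def
  set Ngt := ∏ b ∈ T.filter (i < ·), ((b : ℚ) - i) with hNgt_def
  set NltP := ∏ b ∈ T.filter (· < i), ((i : ℚ) + 1 - b) with hNltP_def
  set NgtP := ∏ b ∈ T.filter (i < ·), ((b : ℚ) - i - 1) with hNgtP_def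
  set Di := ∏ b ∈ T, ((i : ℚ) + b + 2) with hDi_def
  set Di3 := ∏ b ∈ T, ((i : ℚ) + b + 3) with hDi3_def
  set Pa := ∏ b ∈ T, ((i : ℚ) + 1 - b) with hPa_def
  set Pb := ∏ b ∈ T, ((i : ℚ) - b) with hPb_def
  -- leadC S
  have hlS : leadC S = Nlt * Ngt * NP T / ((Nat.factorial (i + 1) : ℚ) * FP T * (Di * DP T)) := by
    rw [hST, leadC_eq, NP_insert T i hiT, DP_insert T i hiT, FP_insert T i hiT]
  -- leadC of the new set
  have hfilt_lt : T.filter (· < i + 1) = T.filter (· < i) := by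
    refine Finset.filter_congr fun b hb => ?_
    have : b ≠ i := fun h => hiT (h ▸ hb)
    constructor <;> intro h <;> omega
  have hfilt_gt : T.filter (i + 1 < ·) = T.filter (i < ·) := by
    refine Finset.filter_congr fun b hb => ?_
    have h1 : b ≠ i := fun h => hiT (h ▸ hb)
    have h2 : b ≠ i + 1 := fun h => hi1T (h ▸ hb)
    constructor <;> intro h <;> omega
  have hlJ : leadC (insert (i + 1) T)
      = NltP * NgtP * NP T /
        (((i : ℚ) + 2) * (Nat.factorial (i + 1) : ℚ) * FP T * (Di3 * DP T)) := by
    rw [leadC_eq, NP_insert T (i + 1) hi1T, DP_insert T (i + 1) hi1T, FP_insert T (i + 1) hi1T]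
    rw [hfilt_lt, hfilt_gt]
    have e1 : ∏ b ∈ T.filter (· < i), (((i + 1 : ℕ) : ℚ) - b) = NltP := by
      refine Finset.prod_congr rfl fun b _ => ?_; push_cast; ring
    have e2 : ∏ b ∈ T.filter (i < ·), ((b : ℚ) - ((i + 1 : ℕ) : ℚ)) = NgtP := by
      refine Finset.prod_congr rfl fun b _ => ?_; push_cast; ring
    have e3 : ∏ b ∈ T, (((i + 1 : ℕ) : ℚ) + b + 2) = Di3 := by
      refine Finset.prod_congr rfl fun b _ => ?_; push_cast; ring
    have e4 : (Nat.factorial (i + 1 + 1) : ℚ) = ((i : ℚ) + 2) * (Nat.factorial (i + 1) : ℚ) := by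
      rw [Nat.factorial_succ]; push_cast; ring
    rw [e1, e2, e3, e4]
  -- product rewrites
  have h3 : ∏ b ∈ S, (wq i - vq b) = (2 * ((i : ℚ) + 1)) * ∏ b ∈ T, (wq i - vq b) := by
    rw [hST, Finset.prod_insert hiT]
    congr 1
    unfold wq vq; ring
  have h4 : ∏ b ∈ T, (wq i - vq b) = Pa * Di := by
    rw [hPa_def, hDi_def, ← Finset.prod_mul_distrib]
    refine Finset.prod_congr rfl fun b _ => ?_
    unfold wq vq; ring
  have h5 : ∏ b ∈ T, (wq i - wq b) = Pb * Di3 := by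
    rw [hPb_def, hDi3_def, ← Finset.prod_mul_distrib]
    refine Finset.prod_congr rfl fun b _ => ?_
    unfold wq; ring
  -- sign bookkeeping
  set k := (T.filter (i < ·)).card with hk
  have hsplitPa : Pa = NltP * ((-1 : ℚ) ^ k * NgtP) := by
    rw [hPa_def, ← prod_split_lt_gt T i hiT]
    congr 1
    rw [hNgtP_def, ← Finset.prod_const, ← Finset.prod_mul_distrib]
    refine Finset.prod_congr rfl fun b _ => by ring
  have hsplitPb : Pb = Nlt * ((-1 : ℚ) ^ k * Ngt) := by
    rw [hPb_def, ← prod_split_lt_gt T i hiT]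
    congr 1
    rw [hNgt_def, ← Finset.prod_const, ← Finset.prod_mul_distrib]
    refine Finset.prod_congr rfl fun b _ => by ring
  -- nonvanishing
  have hNlt : Nlt ≠ 0 := by
    refine Finset.prod_ne_zero_iff.mpr fun b hb => ?_
    have hb' : b < i := (Finset.mem_filter.mp hb).2
    have : (b : ℚ) < i := by exact_mod_cast hb'
    intro h; linarith [sub_eq_zero.mp h]
  have hNgt : Ngt ≠ 0 := by
    refine Finset.prod_ne_zero_iff.mpr fun b hb => ?_
    have hb' : i < b := (Finset.mem_filter.mp hb).2
    have : (i : ℚ) < b := by exact_mod_cast hb'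
    intro h; linarith [sub_eq_zero.mp h]
  have hNltP : NltP ≠ 0 := by
    refine Finset.prod_ne_zero_iff.mpr fun b hb => ?_
    have hb' : b < i := (Finset.mem_filter.mp hb).2
    have : (b : ℚ) < i := by exact_mod_cast hb'
    intro h; nlinarith
  have hNgtP : NgtP ≠ 0 := by
    refine Finset.prod_ne_zero_iff.mpr fun b hb => ?_
    have hb1 : b ∈ T := (Finset.mem_filter.mp hb).1
    have hb' : i < b := (Finset.mem_filter.mp hb).2
    have hne : b ≠ i + 1 := fun h => hi1T (h ▸ hb1)
    have : i + 2 ≤ b := by omega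
    have : ((i : ℚ) + 2) ≤ b := by exact_mod_cast this
    intro h; nlinarith
  have hPbne : Pb ≠ 0 := by
    rw [hsplitPb]
    exact mul_ne_zero hNlt (mul_ne_zero (pow_ne_zero _ (by norm_num)) hNgt)
  have hDi : Di ≠ 0 := by
    refine Finset.prod_ne_zero_iff.mpr fun b _ => by positivity
  have hDi3 : Di3 ≠ 0 := by
    refine Finset.prod_ne_zero_iff.mpr fun b _ => by positivity
  have hNP : NP T ≠ 0 := (NP_pos T).ne'
  have hDP : DP T ≠ 0 := (DP_pos T).ne'
  have hFP : FP T ≠ 0 := (FP_pos T).ne'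
  have hfac : (Nat.factorial (i + 1) : ℚ) ≠ 0 := by
    exact_mod_cast (Nat.factorial_pos (i + 1)).ne'
  have hwqi : wq i ≠ 0 := (wq_pos i).ne'
  have hi1q : ((i : ℚ) + 1) ≠ 0 := by positivity
  have hi2q : ((i : ℚ) + 2) ≠ 0 := by positivity
  -- express Pa via the others
  have hPa : Pa = Pb * (NltP * NgtP) / (Nlt * Ngt) := by
    rw [eq_div_iff (mul_ne_zero hNlt hNgt), hsplitPa, hsplitPb]
    ring
  -- assemble
  rw [hlS, hlJ, h3, Finset.prod_inv_distrib, h5, h4, hPa]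
  have hwq : wq i = ((i : ℚ) + 1) * ((i : ℚ) + 2) := rfl
  rw [hwq]
  field_simp
open Polynomial in
lemma lagrange_sum (T : Finset ℚ) (P : ℚ[X]) (hdeg : P.degree < T.card) :
    ∑ x ∈ T, P.eval x * ∏ y ∈ T.erase x, (x - y)⁻¹ = P.coeff (T.card - 1) := by
  have hinj : Set.InjOn id (T : Set ℚ) := Function.injective_id.injOn
  have hP := Lagrange.eq_interpolate (f := P) hinj hdeg
  conv_rhs => rw [hP]
  rw [Lagrange.interpolate_apply, Polynomial.finset_sum_coeff]
  refine Finset.sum_congr rfl fun x hx => ?_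
  rw [Polynomial.coeff_C_mul]
  have hnd : (Lagrange.basis T id x).natDegree = T.card - 1 :=
    Lagrange.natDegree_basis hinj hx
  have h2 : (Lagrange.basis T id x).coeff (T.card - 1) = (Lagrange.basis T id x).leadingCoeff := by
    rw [Polynomial.leadingCoeff, hnd]
  rw [h2, Lagrange.basis, Polynomial.leadingCoeff_prod]
  simp only [id_eq]
  refine congrArg _ (Finset.prod_congr rfl fun y hy => ?_)
  rw [Lagrange.basisDivisor, Polynomial.leadingCoeff_mul, Polynomial.leadingCoeff_C,
    Polynomial.leadingCoeff_X_sub_C, mul_one]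

lemma key_identity (I : Finset ℕ) (h0 : 0 ∈ I) :
    leadC I = leadC (I.erase 0) -
      2 * ∑ i ∈ (I.erase 0).filter (fun i => i + 1 ∉ I),
        leadC (insert (i + 1) ((I.erase 0).erase i)) := by
  set S := I.erase 0 with hS
  have h0S : 0 ∉ S := Finset.notMem_erase 0 I
  have hI : I = insert 0 S := (Finset.insert_erase h0).symm
  have hwne : ∀ j : ℕ, wq j ≠ 0 := fun j => (wq_pos j).ne'
  have h0img : (0 : ℚ) ∉ S.image wq := by
    simp only [Finset.mem_image, not_exists]
    intro b
    rintro ⟨_, hb⟩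
    exact hwne b hb
  -- the polynomial
  set P : Polynomial ℚ := ∏ b ∈ S, (Polynomial.X - Polynomial.C (vq b)) with hP
  have hPmonic : P.Monic := Polynomial.monic_prod_of_monic _ _
    (fun b _ => Polynomial.monic_X_sub_C _)
  have hPdeg : P.natDegree = S.card := by
    rw [hP, Polynomial.natDegree_prod_of_monic _ _ (fun b _ => Polynomial.monic_X_sub_C _)]
    simp [Polynomial.natDegree_X_sub_C]
  set Nodes : Finset ℚ := insert 0 (S.image wq) with hNodes
  have hcard : Nodes.card = S.card + 1 := by
    rw [hNodes, Finset.card_insert_of_notMem h0img,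
      Finset.card_image_of_injective _ wq_inj]
  have hdeg : P.degree < Nodes.card := by
    refine lt_of_le_of_lt (Polynomial.degree_le_natDegree) ?_
    rw [hPdeg, hcard]
    exact_mod_cast Nat.lt_succ_self S.card
  have hmain := lagrange_sum Nodes P hdeg
  rw [hcard, Nat.add_sub_cancel] at hmain
  have hcoeff : P.coeff S.card = 1 := by
    have := hPmonic
    rw [Polynomial.Monic, Polynomial.leadingCoeff, hPdeg] at this
    exact this
  rw [hcoeff] at hmain
  -- split the sum
  rw [hNodes, Finset.sum_insert h0img, Finset.sum_image (fun a _ b _ h => wq_inj h)] at hmain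
  -- evaluate term at 0
  have hev : ∀ x : ℚ, P.eval x = ∏ b ∈ S, (x - vq b) := by
    intro x
    rw [hP, Polynomial.eval_prod]
    refine Finset.prod_congr rfl fun b _ => by simp
  have herase0 : Nodes.erase 0 = S.image wq := by
    rw [hNodes, Finset.erase_insert h0img]
  have hterm0 : P.eval 0 * ∏ y ∈ Nodes.erase 0, (0 - y)⁻¹
      = ∏ b ∈ S, (vq b * (wq b)⁻¹) := by
    rw [herase0, hev, Finset.prod_image (fun a _ b _ h => wq_inj h), ← Finset.prod_mul_distrib]
    refine Finset.prod_congr rfl fun b _ => ?_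
    rw [zero_sub, zero_sub, inv_neg, mul_neg, neg_mul, neg_neg]
  rw [hterm0] at hmain
  -- rewrite terms at w i
  have hterm : ∀ i ∈ S, P.eval (wq i) * ∏ y ∈ Nodes.erase (wq i), (wq i - y)⁻¹
      = (∏ b ∈ S, (wq i - vq b)) * (wq i)⁻¹ * ∏ b ∈ S.erase i, (wq i - wq b)⁻¹ := by
    intro i hiS
    have h1 : Nodes.erase (wq i) = insert 0 ((S.erase i).image wq) := by
      rw [hNodes, Finset.erase_insert_of_ne (hwne i).symm, ← Finset.image_erase wq_inj]
    have h2 : (0 : ℚ) ∉ (S.erase i).image wq := by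
      simp only [Finset.mem_image, not_exists]
      intro b
      rintro ⟨_, hb⟩
      exact hwne b hb
    rw [h1, Finset.prod_insert h2, hev, Finset.prod_image (fun a _ b _ h => wq_inj h),
      sub_zero]
    ring
  rw [Finset.sum_congr rfl hterm] at hmain
  -- hmain : ∏ + ∑ E i = 1
  -- step (a)
  have hbpos : ∀ b ∈ S, 0 < b := by
    intro b hb
    have : b ≠ 0 := fun h => h0S (h ▸ hb)
    omega
  have ha : leadC I = leadC S * ∏ b ∈ S, (vq b * (wq b)⁻¹) := by
    have hprod : ∏ b ∈ S, (vq b * (wq b)⁻¹) = (∏ b ∈ S, (b : ℚ)) * (∏ b ∈ S, ((b : ℚ) + 2))⁻¹ := by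
      rw [← Finset.prod_inv_distrib, ← Finset.prod_mul_distrib]
      refine Finset.prod_congr rfl fun b _ => ?_
      have h1 : ((b : ℚ) + 1) ≠ 0 := by positivity
      have h2 : ((b : ℚ) + 2) ≠ 0 := by positivity
      unfold vq wq
      field_simp
    have hflt : S.filter (· < 0) = ∅ := by
      refine Finset.filter_false_of_mem fun b _ => by omega
    have hfgt : S.filter (0 < ·) = S := by
      refine Finset.filter_true_of_mem fun b hb => hbpos b hb
    rw [hI, leadC_eq, NP_insert S 0 h0S, DP_insert S 0 h0S, FP_insert S 0 h0S, leadC_eq,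
      hprod, hflt, hfgt]
    have e1 : ∏ x ∈ S, ((x : ℚ) - ((0:ℕ) : ℚ)) = ∏ b ∈ S, (b : ℚ) := by
      refine Finset.prod_congr rfl fun b _ => by push_cast; ring
    have e2 : ∏ b ∈ S, (((0:ℕ) : ℚ) + b + 2) = ∏ b ∈ S, ((b : ℚ) + 2) := by
      refine Finset.prod_congr rfl fun b _ => by push_cast; ring
    rw [e1, e2]
    have hb2 : (∏ b ∈ S, ((b : ℚ) + 2)) ≠ 0 :=
      Finset.prod_ne_zero_iff.mpr fun b _ => by positivity
    have hNP := (NP_pos S).ne'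
    have hDP := (DP_pos S).ne'
    have hFP := (FP_pos S).ne'
    simp only [Finset.prod_empty, one_mul, Nat.factorial_one, Nat.cast_one]
    field_simp
    ring
  -- step (c): terms with i+1 ∈ I vanish
  have hsum_eq : ∑ i ∈ S, leadC S * ((∏ b ∈ S, (wq i - vq b)) * (wq i)⁻¹ *
        ∏ b ∈ S.erase i, (wq i - wq b)⁻¹)
      = ∑ i ∈ S.filter (fun i => i + 1 ∉ I), leadC S * ((∏ b ∈ S, (wq i - vq b)) * (wq i)⁻¹ *
        ∏ b ∈ S.erase i, (wq i - wq b)⁻¹) := by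
    symm
    refine Finset.sum_filter_of_ne fun i hiS hne => fun hi1 => hne ?_
    have hi1S : i + 1 ∈ S := by
      rw [hS, Finset.mem_erase]
      exact ⟨by omega, hi1⟩
    have : (∏ b ∈ S, (wq i - vq b)) = 0 := by
      refine Finset.prod_eq_zero hi1S ?_
      unfold wq vq
      push_cast
      ring
    rw [this]
    ring
  -- step (b) applied to each remaining term
  have hb : ∀ i ∈ S.filter (fun i => i + 1 ∉ I),
      leadC S * ((∏ b ∈ S, (wq i - vq b)) * (wq i)⁻¹ * ∏ b ∈ S.erase i, (wq i - wq b)⁻¹)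
        = 2 * leadC (insert (i + 1) (S.erase i)) := by
    intro i hi
    obtain ⟨hiS, hi1⟩ := Finset.mem_filter.mp hi
    have hi1S : i + 1 ∉ S := fun h => hi1 (Finset.mem_of_mem_erase h)
    exact step_b S i hiS hi1S
  -- assemble
  calc leadC I = leadC S * ∏ b ∈ S, (vq b * (wq b)⁻¹) := ha
    _ = leadC S * (1 - ∑ i ∈ S, ((∏ b ∈ S, (wq i - vq b)) * (wq i)⁻¹ *
          ∏ b ∈ S.erase i, (wq i - wq b)⁻¹)) := by rw [← hmain]; ring
    _ = leadC S - ∑ i ∈ S, leadC S * ((∏ b ∈ S, (wq i - vq b)) * (wq i)⁻¹ *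
          ∏ b ∈ S.erase i, (wq i - wq b)⁻¹) := by
        rw [mul_sub, mul_one, Finset.mul_sum]
    _ = leadC S - ∑ i ∈ S.filter (fun i => i + 1 ∉ I),
          2 * leadC (insert (i + 1) (S.erase i)) := by
        rw [hsum_eq, Finset.sum_congr rfl hb]
    _ = leadC S - 2 * ∑ i ∈ S.filter (fun i => i + 1 ∉ I),
          leadC (insert (i + 1) (S.erase i)) := by
        rw [Finset.mul_sum]

/-- Inductive step (Case 1, `0 ∈ I`) of the leading-coefficient theorem for type C
Lascoux polynomials: if `LP` satisfies the first recurrence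
`LP_I(n) = (n - r + 1) LP_{I∖{0}}(n) - 2 ∑_{i ∈ I, i ≠ 0, i+1 ∉ I} LP_{I∪{i+1}∖{0,i}}(n)`
and every set `J` appearing on the right-hand side satisfies the degree and
leading-coefficient formula, then so does `I`. -/
theorem lascoux_leading_coeff_inductive_step
    (LP : Finset ℕ → ℕ → ℚ) (I : Finset ℕ) (h0 : 0 ∈ I)
    (hrec : ∀ n : ℕ, LP I n =
      ((n : ℚ) - (I.card : ℚ) + 1) * LP (I.erase 0) n -
        2 * ∑ i ∈ (I.erase 0).filter (fun i => i + 1 ∉ I),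
          LP (insert (i + 1) ((I.erase 0).erase i)) n)
    (h1 : IsPolyWithLead (LP (I.erase 0))
      ((I.erase 0).card + ∑ i ∈ I.erase 0, i) (leadC (I.erase 0)))
    (h2 : ∀ i ∈ (I.erase 0).filter (fun i => i + 1 ∉ I),
      IsPolyWithLead (LP (insert (i + 1) ((I.erase 0).erase i)))
        ((insert (i + 1) ((I.erase 0).erase i)).card +
          ∑ j ∈ insert (i + 1) ((I.erase 0).erase i), j)
        (leadC (insert (i + 1) ((I.erase 0).erase i)))) :
    IsPolyWithLead (LP I) (I.card + ∑ i ∈ I, i) (leadC I) := by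
  classical
  set S := I.erase 0 with hS
  set fil := S.filter (fun i => i + 1 ∉ I) with hfil
  set d1 := S.card + ∑ i ∈ S, i with hd1
  obtain ⟨p1, hp1ev, hp1deg, hp1lead⟩ := h1
  choose p hpev hpdeg hplead using h2
  have hcardI : I.card = S.card + 1 := by
    have h1' : S.card = I.card - 1 := Finset.card_erase_of_mem h0
    have h2' : 1 ≤ I.card := Finset.card_pos.mpr ⟨0, h0⟩
    omega
  have hsumI : ∑ i ∈ I, i = ∑ i ∈ S, i := by
    exact (Finset.sum_erase I (by simp)).symm
  have hD : I.card + ∑ i ∈ I, i = d1 + 1 := by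
    rw [hcardI, hsumI, hd1]; omega
  have hdegJ : ∀ i (hi : i ∈ fil), (p i hi).natDegree = d1 + 1 := by
    intro i hi
    rw [hpdeg i hi]
    obtain ⟨hiS, hi1⟩ := Finset.mem_filter.mp hi
    have hi1T : i + 1 ∉ S.erase i := fun h => hi1 (Finset.mem_of_mem_erase (Finset.mem_of_mem_erase h))
    have hc : (insert (i + 1) (S.erase i)).card = (S.erase i).card + 1 :=
      Finset.card_insert_of_notMem hi1T
    have hc2 : (S.erase i).card = S.card - 1 := Finset.card_erase_of_mem hiS
    have hc3 : 1 ≤ S.card := Finset.card_pos.mpr ⟨i, hiS⟩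
    have hs1 : ∑ j ∈ insert (i + 1) (S.erase i), j = (i + 1) + ∑ j ∈ S.erase i, j :=
      Finset.sum_insert hi1T
    have hs2 : i + ∑ j ∈ S.erase i, j = ∑ j ∈ S, j := Finset.add_sum_erase S (fun j => j) hiS
    omega
  set c : ℚ := (I.card : ℚ) - 1 with hc
  set q : Polynomial ℚ := ∑ i ∈ fil.attach, p i.1 i.2 with hq
  set P : Polynomial ℚ := p1 * (Polynomial.X - Polynomial.C c) - Polynomial.C 2 * q with hP
  have hev : ∀ᶠ n : ℕ in Filter.atTop, LP I n = P.eval (n : ℚ) := by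
    have hev2 : ∀ᶠ n : ℕ in Filter.atTop, ∀ i ∈ fil.attach,
        LP (insert (i.1 + 1) (S.erase i.1)) n = (p i.1 i.2).eval (n : ℚ) := by
      rw [Filter.eventually_all_finset]
      intro i _
      exact hpev i.1 i.2
    filter_upwards [hp1ev, hev2] with n hn1 hn2
    rw [hrec n, hP]
    have hsum : ∑ i ∈ fil, LP (insert (i + 1) (S.erase i)) n
        = ∑ i ∈ fil.attach, (p i.1 i.2).eval (n : ℚ) := by
      rw [← Finset.sum_attach fil (fun i => LP (insert (i + 1) (S.erase i)) n)]
      exact Finset.sum_congr rfl hn2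
    rw [hsum, hn1]
    simp only [Polynomial.eval_sub, Polynomial.eval_mul, Polynomial.eval_X,
      Polynomial.eval_C, hq, Polynomial.eval_finset_sum, hc]
    ring
  have hq_coeff : q.coeff (d1 + 1) = ∑ i ∈ fil, leadC (insert (i + 1) (S.erase i)) := by
    rw [hq, Polynomial.finset_sum_coeff,
      ← Finset.sum_attach fil (fun i => leadC (insert (i + 1) (S.erase i)))]
    refine Finset.sum_congr rfl fun i _ => ?_
    rw [← hdegJ i.1 i.2, Polynomial.coeff_natDegree, hplead i.1 i.2]
  have hp1top : p1.coeff (d1 + 1) = 0 :=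
    Polynomial.coeff_eq_zero_of_natDegree_lt (by rw [hp1deg]; omega)
  have hp1d : p1.coeff d1 = leadC S := by
    have : d1 = p1.natDegree := by rw [hp1deg]
    rw [this, Polynomial.coeff_natDegree, hp1lead]
  have hPcoeff : P.coeff (d1 + 1) = leadC I := by
    rw [hP, Polynomial.coeff_sub, Polynomial.coeff_mul_X_sub_C, Polynomial.coeff_C_mul,
      hq_coeff, hp1top, hp1d, key_identity I h0]
    ring
  have hbound : P.natDegree ≤ d1 + 1 := by
    refine le_trans (Polynomial.natDegree_sub_le _ _) (max_le ?_ ?_)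
    · refine le_trans (Polynomial.natDegree_mul_le) ?_
      rw [hp1deg, Polynomial.natDegree_X_sub_C]
    · refine le_trans (Polynomial.natDegree_C_mul_le _ _) ?_
      rw [hq]
      exact Polynomial.natDegree_sum_le_of_forall_le _ _ fun i _ => le_of_eq (hdegJ i.1 i.2)
  have hne : leadC I ≠ 0 := (leadC_pos I).ne'
  have hPnat : P.natDegree = d1 + 1 :=
    le_antisymm hbound (Polynomial.le_natDegree_of_ne_zero (by rw [hPcoeff]; exact hne))
  exact ⟨P, hev, by rw [hPnat, hD], by rw [Polynomial.leadingCoeff, hPnat, hPcoeff]⟩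
end

section
/- For every integer m > 0, the leading coefficient of the polynomial n ↦ δ(m, n, n−1) equals 2^{m−1}/m!, and the degree of this polynomial is m. -/
open Finset

/-- Pascal-matrix minor with rows `I` and columns `J` (each sorted, of size `r`). -/
noncomputable def pascalMinor (r : ℕ) (I J : Finset ℕ) : ℤ :=
  Matrix.det (Matrix.of fun a b : Fin r =>
    (Nat.choose ((I.sort (· ≤ ·)).getD a 0) ((J.sort (· ≤ ·)).getD b 0) : ℤ))

/-- The Lascoux coefficient `ψ_I`. -/
noncomputable def lascouxCoeff (I : Finset ℕ) : ℤ :=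
  ∑ᶠ J ∈ {J : Finset ℕ | J.card = I.card}, pascalMinor I.card I J

/-- The Lascoux polynomial (type C). -/
noncomputable def LPC (I : Finset ℕ) (n : ℕ) : ℤ :=
  if I ⊆ Finset.range n then lascouxCoeff (Finset.range n \ I) else 0

/-- The algebraic degree of semidefinite programming via the Bothmer–Ranestad formula:
`δ(m,n,n-s) = ∑_{I ⊆ [n], |I| = s, ∑I = m-s} ψ_I · LP_I(n)`. -/
noncomputable def deltaC (m n s : ℕ) : ℤ :=
  ∑ I ∈ ((Finset.range n).powersetCard s).filter (fun I => (∑ i ∈ I, i) + s = m),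
    lascouxCoeff I * LPC I n

section Aux

/-- Alternating binomial inversion identity. -/
lemma pascal_inv_sum (n a b : ℕ) (ha : a < n) :
    ∑ k ∈ range n, (a.choose k : ℤ) * ((-1) ^ (k + b) * (k.choose b : ℤ))
      = if a = b then 1 else 0 := by
  have hsub : Finset.Ico b (a + 1) ⊆ range n := by
    rw [Finset.range_eq_Ico]
    exact Finset.Ico_subset_Ico (Nat.zero_le b) (by omega)
  have h1 : ∑ k ∈ range n, (a.choose k : ℤ) * ((-1) ^ (k + b) * (k.choose b : ℤ))
      = ∑ k ∈ Finset.Ico b (a + 1), (a.choose k : ℤ) * ((-1) ^ (k + b) * (k.choose b : ℤ)) := by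
    refine (Finset.sum_subset hsub ?_).symm
    intro x hx hx'
    simp only [Finset.mem_Ico, not_and, not_lt] at hx'
    rcases lt_or_ge x b with h | h
    · have : x.choose b = 0 := Nat.choose_eq_zero_of_lt h
      simp [this]
    · have : a < x := by have := hx' h; omega
      have : a.choose x = 0 := Nat.choose_eq_zero_of_lt this
      simp [this]
  rw [h1]
  rcases lt_or_ge a b with hab | hba
  · rw [Finset.Ico_eq_empty (by omega), Finset.sum_empty, if_neg (by omega)]
  · rw [Finset.sum_Ico_eq_sum_range]
    have hr : a + 1 - b = (a - b) + 1 := by omega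
    rw [hr]
    have hterm : ∀ t ∈ range ((a - b) + 1),
        (a.choose (b + t) : ℤ) * ((-1) ^ (b + t + b) * ((b + t).choose b : ℤ))
          = (a.choose b : ℤ) * ((-1) ^ t * ((a - b).choose t : ℤ)) := by
      intro t ht
      rw [Finset.mem_range] at ht
      have htle : b + t ≤ a := by omega
      have hcc := Nat.choose_mul (n := a) (Nat.le_add_right b t)
      have hcc' : ((a.choose (b + t) : ℤ)) * (((b + t).choose b : ℤ))
          = (a.choose b : ℤ) * ((a - b).choose t : ℤ) := by
        have h := congrArg (Nat.cast : ℕ → ℤ) hcc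
        push_cast at h
        simpa [Nat.add_sub_cancel_left] using h
      have hsign : ((-1 : ℤ)) ^ (b + t + b) = (-1) ^ t := by
        rw [show b + t + b = t + 2 * b by ring, pow_add, pow_mul, neg_one_sq, one_pow, mul_one]
      rw [hsign]
      linear_combination ((-1 : ℤ)) ^ t * hcc'
    rw [Finset.sum_congr rfl hterm, ← Finset.mul_sum, Int.alternating_sum_range_choose]
    rcases eq_or_ne a b with rfl | hne
    · simp
    · rw [if_neg (by omega), if_neg hne, mul_zero]

/-- The Pascal matrix. -/
def pasM (n : ℕ) : Matrix (Fin n) (Fin n) ℤ :=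
  Matrix.of fun a b => ((a : ℕ).choose b : ℤ)

/-- The signed (inverse) Pascal matrix. -/
def pasN (n : ℕ) : Matrix (Fin n) (Fin n) ℤ :=
  Matrix.of fun a b => (-1) ^ ((a : ℕ) + (b : ℕ)) * ((a : ℕ).choose b : ℤ)

lemma pasM_mul_pasN (n : ℕ) : pasM n * pasN n = 1 := by
  ext a b
  rw [Matrix.mul_apply, Matrix.one_apply]
  simp only [pasM, pasN, Matrix.of_apply]
  rw [Fin.sum_univ_eq_sum_range
    (fun k => ((a : ℕ).choose k : ℤ) * ((-1) ^ (k + (b : ℕ)) * ((k : ℕ).choose b : ℤ)))]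
  rw [pascal_inv_sum n a b a.isLt]
  simp [Fin.ext_iff]

lemma det_pasM (n : ℕ) : (pasM n).det = 1 := by
  have hbt : (pasM n).BlockTriangular OrderDual.toDual := by
    intro i j h
    have : (i : ℕ) < (j : ℕ) := h
    simp [pasM, Nat.choose_eq_zero_of_lt this]
  rw [Matrix.det_of_lowerTriangular _ hbt]
  simp [pasM]

lemma adjugate_pasM (n : ℕ) : (pasM n).adjugate = pasN n := by
  have h2 : pasN n * pasM n = 1 := mul_eq_one_comm.mp (pasM_mul_pasN n)
  calc (pasM n).adjugate = 1 * (pasM n).adjugate := (one_mul _).symm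
    _ = pasN n * (pasM n * (pasM n).adjugate) := by rw [← h2, Matrix.mul_assoc]
    _ = pasN n := by rw [Matrix.mul_adjugate, det_pasM, one_smul, Matrix.mul_one]

lemma det_pasM_submatrix {N : ℕ} (i j : Fin (N + 1)) :
    ((pasM (N + 1)).submatrix i.succAbove j.succAbove).det = ((j : ℕ).choose i : ℤ) := by
  have h := Matrix.adjugate_fin_succ_eq_det_submatrix (pasM (N + 1)) j i
  rw [adjugate_pasM] at h
  have hsq : ((-1 : ℤ)) ^ ((i : ℕ) + (j : ℕ)) * ((-1 : ℤ)) ^ ((i : ℕ) + (j : ℕ)) = 1 := by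
    rw [← pow_add]
    exact Even.neg_one_pow ⟨(i : ℕ) + (j : ℕ), rfl⟩
  have h2 := congrArg (fun z => ((-1 : ℤ)) ^ ((i : ℕ) + (j : ℕ)) * z) h
  rw [← mul_assoc, hsq, one_mul] at h2
  rw [← h2]
  simp only [pasN, Matrix.of_apply]
  rw [add_comm ((j : ℕ)) ((i : ℕ)), ← mul_assoc, hsq, one_mul]

lemma sort_compl {N : ℕ} (i : Fin (N + 1)) :
    (Finset.range (N + 1) \ {(i : ℕ)}).sort (· ≤ ·)
      = (List.finRange N).map (fun a => ((i.succAbove a : Fin (N + 1)) : ℕ)) := by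
  have hinj : Function.Injective (fun a : Fin N => ((i.succAbove a : Fin (N + 1)) : ℕ)) :=
    Fin.val_injective.comp (Fin.succAbove_right_injective (p := i))
  refine (fun hp hs => List.Perm.eq_of_pairwise' (Finset.pairwise_sort _ _) hs hp) ?_ ?_
  · rw [List.perm_ext_iff_of_nodup (Finset.sort_nodup _ _) ((List.nodup_finRange N).map hinj)]
    intro x
    simp only [Finset.mem_sort, Finset.mem_sdiff, Finset.mem_range, Finset.mem_singleton,
      List.mem_map, List.mem_finRange, true_and]
    constructor
    · rintro ⟨hx, hxi⟩
      obtain ⟨a, ha⟩ := Fin.exists_succAbove_eq (x := (⟨x, hx⟩ : Fin (N + 1))) (y := i)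
        (by simpa [Fin.ext_iff] using hxi)
      exact ⟨a, by rw [ha]⟩
    · rintro ⟨a, rfl⟩
      refine ⟨(i.succAbove a).isLt, ?_⟩
      simpa [Fin.ext_iff] using Fin.succAbove_ne i a
  · refine List.Pairwise.map _ (fun a b hab => ?_) (List.pairwise_lt_finRange N)
    exact le_of_lt (by exact_mod_cast Fin.strictMono_succAbove i hab)

lemma getD_sort_compl {N : ℕ} (i : Fin (N + 1)) (a : Fin N) :
    ((Finset.range (N + 1) \ {(i : ℕ)}).sort (· ≤ ·)).getD a 0 = (i.succAbove a : ℕ) := by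
  rw [sort_compl]
  have ha : (a : ℕ) < ((List.finRange N).map
      (fun a => ((i.succAbove a : Fin (N + 1)) : ℕ))).length := by
    simpa using a.isLt
  rw [List.getD_eq_getElem _ _ ha, List.getElem_map]
  congr 1
  exact congrArg _ (by simpa using List.get_finRange (n := N) (i := (a : ℕ)) (by simp))

lemma pascalMinor_compl {N : ℕ} (i j : Fin (N + 1)) :
    pascalMinor N (range (N + 1) \ {(i : ℕ)}) (range (N + 1) \ {(j : ℕ)})
      = ((j : ℕ).choose i : ℤ) := by
  rw [← det_pasM_submatrix i j, pascalMinor]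
  congr 1
  ext a b
  rw [Matrix.of_apply, getD_sort_compl i a, getD_sort_compl j b]
  rfl

lemma card_compl {n j : ℕ} (hj : j < n) : (range n \ {j}).card = n - 1 := by
  rw [Finset.card_sdiff_of_subset (by simpa using hj), Finset.card_range, Finset.card_singleton]

lemma card_compl' {N j : ℕ} (hj : j < N + 1) : (range (N + 1) \ {j}).card = N := by
  rw [card_compl hj]
  omega

lemma injOn_compl {n : ℕ} : ∀ x ∈ range n, ∀ y ∈ range n,
    range n \ {x} = range n \ {y} → x = y := by
  intro x hx y hy h
  have hxx : ({x} : Finset ℕ) = range n ∩ {x} := by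
    rw [Finset.inter_eq_right.mpr (by simpa using hx)]
  have hyy : ({y} : Finset ℕ) = range n ∩ {y} := by
    rw [Finset.inter_eq_right.mpr (by simpa using hy)]
  have : ({x} : Finset ℕ) = {y} := by
    rw [hxx, hyy, ← Finset.sdiff_sdiff_self_left, ← Finset.sdiff_sdiff_self_left, h]
  simpa using this

lemma pascalMinor_eq_zero {n r : ℕ} {I J : Finset ℕ} (hI : I ⊆ range n) (hIc : I.card = r)
    (hJc : J.card = r) {y : ℕ} (hy : y ∈ J) (hny : n ≤ y) :
    pascalMinor r I J = 0 := by
  have hylist : y ∈ J.sort (· ≤ ·) := (Finset.mem_sort _).mpr hy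
  obtain ⟨b, hb, hby⟩ := List.mem_iff_getElem.mp hylist
  have hlenJ : (J.sort (· ≤ ·)).length = r := by rw [Finset.length_sort, hJc]
  have hlenI : (I.sort (· ≤ ·)).length = r := by rw [Finset.length_sort, hIc]
  apply Matrix.det_eq_zero_of_column_eq_zero (⟨b, hlenJ ▸ hb⟩ : Fin r)
  intro a
  have h1 : (J.sort (· ≤ ·)).getD b 0 = y := by
    rw [List.getD_eq_getElem _ _ hb, hby]
  have haI : (I.sort (· ≤ ·)).getD a 0 ∈ I := by
    have ha : (a : ℕ) < (I.sort (· ≤ ·)).length := by rw [hlenI]; exact a.isLt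
    rw [List.getD_eq_getElem _ _ ha]
    exact (Finset.mem_sort _).mp (List.getElem_mem ha)
  have h2 : (I.sort (· ≤ ·)).getD a 0 < n := by
    have := hI haI
    simpa using this
  simp only [Matrix.of_apply]
  rw [h1]
  exact_mod_cast congrArg (Nat.cast : ℕ → ℤ) (Nat.choose_eq_zero_of_lt (by omega))

lemma lascouxCoeff_singleton (i : ℕ) : lascouxCoeff {i} = 2 ^ i := by
  have hmin : ∀ j : ℕ, pascalMinor 1 {i} {j} = (i.choose j : ℤ) := by
    intro j
    rw [pascalMinor, Matrix.det_fin_one]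
    simp [Finset.sort_singleton]
  rw [lascouxCoeff]
  simp only [Finset.card_singleton]
  rw [finsum_mem_eq_sum_of_inter_support_eq _
    (t := (range (i + 1)).image (fun j => ({j} : Finset ℕ)))]
  · rw [Finset.sum_image (fun x _ y _ h => by simpa using h)]
    have : ∀ j ∈ range (i + 1), pascalMinor 1 {i} {j} = (i.choose j : ℤ) := fun j _ => hmin j
    rw [Finset.sum_congr rfl this]
    rw [← Nat.cast_sum]
    exact_mod_cast congrArg (Nat.cast : ℕ → ℤ) (Nat.sum_range_choose i)
  · ext J
    simp only [Set.mem_inter_iff, Set.mem_setOf_eq, Function.mem_support, Finset.coe_image,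
      Set.mem_image, Finset.mem_coe, Finset.mem_range]
    constructor
    · rintro ⟨hc, hsupp⟩
      obtain ⟨j, rfl⟩ := Finset.card_eq_one.mp hc
      refine ⟨⟨j, ?_, rfl⟩, hsupp⟩
      by_contra hij
      push_neg at hij
      apply hsupp
      rw [hmin j]
      exact_mod_cast congrArg (Nat.cast : ℕ → ℤ) (Nat.choose_eq_zero_of_lt (by omega))
    · rintro ⟨⟨j, _, rfl⟩, hsupp⟩
      exact ⟨Finset.card_singleton j, hsupp⟩

lemma sum_choose_int (n i : ℕ) : ∑ j ∈ range n, ((j.choose i : ℤ)) = (n.choose (i + 1) : ℤ) := by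
  induction n with
  | zero => simp
  | succ n ih =>
    rw [Finset.sum_range_succ, ih]
    have := Nat.choose_succ_succ n i
    push_cast [this]
    ring

lemma lascouxCoeff_compl {N : ℕ} (i : Fin (N + 1)) :
    lascouxCoeff (range (N + 1) \ {(i : ℕ)}) = ((N + 1).choose ((i : ℕ) + 1) : ℤ) := by
  have hcard : (range (N + 1) \ {(i : ℕ)}).card = N := by
    rw [card_compl' i.isLt]
  rw [lascouxCoeff]
  simp only [hcard]
  rw [finsum_mem_eq_sum_of_inter_support_eq _
    (t := (range (N + 1)).image (fun j => range (N + 1) \ {j}))]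
  · rw [Finset.sum_image injOn_compl]
    have hterm : ∀ j ∈ range (N + 1),
        pascalMinor N (range (N + 1) \ {(i : ℕ)}) (range (N + 1) \ {j})
          = ((j.choose i : ℤ)) := by
      intro j hj
      have hjlt : j < N + 1 := Finset.mem_range.mp hj
      exact pascalMinor_compl i ⟨j, hjlt⟩
    rw [Finset.sum_congr rfl hterm, sum_choose_int]
  · ext J
    simp only [Set.mem_inter_iff, Set.mem_setOf_eq, Function.mem_support, Finset.coe_image,
      Set.mem_image, Finset.mem_coe, Finset.mem_range]
    constructor
    · rintro ⟨hc, hsupp⟩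
      have hJsub : J ⊆ range (N + 1) := by
        intro y hy
        rw [Finset.mem_range]
        by_contra hyn
        push_neg at hyn
        exact hsupp (pascalMinor_eq_zero Finset.sdiff_subset hcard hc hy hyn)
      have h1 : (range (N + 1) \ J).card = 1 := by
        rw [Finset.card_sdiff_of_subset hJsub, Finset.card_range, hc]
        omega
      obtain ⟨j, hj⟩ := Finset.card_eq_one.mp h1
      have hjmem : j ∈ range (N + 1) := by
        have : j ∈ range (N + 1) \ J := hj ▸ Finset.mem_singleton_self j
        exact (Finset.mem_sdiff.mp this).1
      refine ⟨⟨j, Finset.mem_range.mp hjmem, ?_⟩, hsupp⟩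
      rw [← hj, Finset.sdiff_sdiff_self_left, Finset.inter_eq_right.mpr hJsub]
    · rintro ⟨⟨j, hj, rfl⟩, hsupp⟩
      exact ⟨by rw [card_compl' hj], hsupp⟩

lemma deltaC_eq_choose {m n : ℕ} (hm : 0 < m) (hmn : m ≤ n) :
    deltaC m n 1 = 2 ^ (m - 1) * (n.choose m : ℤ) := by
  rw [deltaC]
  have hset : ((range n).powersetCard 1).filter (fun I => (∑ i ∈ I, i) + 1 = m)
      = {({m - 1} : Finset ℕ)} := by
    ext I
    simp only [Finset.mem_filter, Finset.mem_powersetCard, Finset.mem_singleton]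
    constructor
    · rintro ⟨⟨hsub, hc⟩, hsum⟩
      obtain ⟨j, rfl⟩ := Finset.card_eq_one.mp hc
      rw [Finset.sum_singleton] at hsum
      have : j = m - 1 := by omega
      rw [this]
    · rintro rfl
      refine ⟨⟨?_, Finset.card_singleton _⟩, ?_⟩
      · simp only [Finset.singleton_subset_iff, Finset.mem_range]
        omega
      · rw [Finset.sum_singleton]
        omega
  rw [hset, Finset.sum_singleton, lascouxCoeff_singleton, LPC,
    if_pos (by simp only [Finset.singleton_subset_iff, Finset.mem_range]; omega)]
  obtain ⟨N, rfl⟩ : ∃ N, n = N + 1 := ⟨n - 1, by omega⟩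
  have h := lascouxCoeff_compl (N := N) ⟨m - 1, by omega⟩
  simp only [Fin.val_mk] at h
  rw [h, show m - 1 + 1 = m by omega]

end Aux

/-- `n ↦ δ(m,n,n-1)` is a polynomial of degree `m` with leading coefficient `2^{m-1}/m!`. -/
theorem deltaC_degree_leadingCoeff (m : ℕ) (hm : 0 < m) :
    ∃ p : Polynomial ℚ,
      (∀ᶠ n in Filter.atTop, (deltaC m n 1 : ℚ) = p.eval (n : ℚ)) ∧
      p.natDegree = m ∧
      p.leadingCoeff = 2 ^ (m - 1) / (Nat.factorial m : ℚ) := by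
  set c : ℚ := 2 ^ (m - 1) / (Nat.factorial m : ℚ) with hc_def
  have hc : c ≠ 0 := by
    apply div_ne_zero
    · positivity
    · exact_mod_cast (Nat.factorial_pos m).ne'
  refine ⟨Polynomial.C c * descPochhammer ℚ m, ?_, ?_, ?_⟩
  · filter_upwards [Filter.eventually_ge_atTop m] with n hn
    rw [deltaC_eq_choose hm hn]
    rw [Polynomial.eval_mul, Polynomial.eval_C, descPochhammer_eval_eq_descFactorial,
      Nat.descFactorial_eq_factorial_mul_choose]
    push_cast
    rw [hc_def]
    have hfac : ((Nat.factorial m : ℚ)) ≠ 0 := by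
      exact_mod_cast (Nat.factorial_pos m).ne'
    field_simp
  · rw [Polynomial.natDegree_mul (Polynomial.C_ne_zero.mpr hc)
      (monic_descPochhammer ℚ m).ne_zero, Polynomial.natDegree_C,
      descPochhammer_natDegree, zero_add]
  · rw [Polynomial.leadingCoeff_mul, Polynomial.leadingCoeff_C,
      (monic_descPochhammer ℚ m).leadingCoeff, mul_one]
end

section
/- For every integer m > 0, 2^{m−1}/m! + (2^{m−2}/(m² · m!)) · ∑_{i=1}^{⌊(m−1)/2⌋} (m − 2i)² C(m, i)² = (2^{m−2}/m!) · ((1/m) C(2(m−1), m−1) + 1). -/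
open Finset

lemma vander (a b k : ℕ) : ∑ i ∈ range (k+1), a.choose i * b.choose (k-i) = (a+b).choose k := by
  rw [Nat.add_choose_eq, Finset.Nat.sum_antidiagonal_eq_sum_range_succ_mk]

lemma S0 (M : ℕ) : ∑ i ∈ range (M+1), (M.choose i)^2 = (2*M).choose M := by
  have h := vander M M M
  rw [two_mul]
  rw [← h]
  refine Finset.sum_congr rfl fun i hi => ?_
  have hiM : i ≤ M := Nat.lt_succ_iff.mp (Finset.mem_range.mp hi)
  rw [Nat.choose_symm hiM, sq]

lemma S1 (n : ℕ) : ∑ i ∈ range (n+2), i * ((n+1).choose i)^2 = (n+1) * (2*n+1).choose n := by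
  rw [Finset.sum_range_succ']
  simp only [Nat.zero_eq, zero_mul, add_zero]
  have h : ∀ i ∈ range (n+1), (i+1) * ((n+1).choose (i+1))^2
      = (n+1) * (n.choose i * (n+1).choose (n-i)) := by
    intro i hi
    have hiM : i ≤ n := Nat.lt_succ_iff.mp (Finset.mem_range.mp hi)
    have h1 : (n+1) * n.choose i = (n+1).choose (i+1) * (i+1) := Nat.add_one_mul_choose_eq n i
    have h2 : (n+1).choose (n-i) = (n+1).choose (i+1) := by
      have : n - i = (n+1) - (i+1) := by omega
      rw [this, Nat.choose_symm (by omega)]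
    rw [h2]
    rw [sq, ← mul_assoc, mul_comm (i+1) ((n+1).choose (i+1)), ← h1]
    ring
  rw [Finset.sum_congr rfl h, ← Finset.mul_sum, vander n (n+1) n]
  congr 2
  omega

lemma S2 (n : ℕ) : ∑ i ∈ range (n+2), i^2 * ((n+1).choose i)^2 = (n+1)^2 * (2*n).choose n := by
  rw [Finset.sum_range_succ']
  simp only [Nat.zero_eq, ne_eq, OfNat.ofNat_ne_zero, not_false_eq_true, zero_pow, zero_mul,
    add_zero]
  have h : ∀ i ∈ range (n+1), ((i:ℕ)+1)^2 * ((n+1).choose (i+1))^2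
      = (n+1)^2 * (n.choose i)^2 := by
    intro i hi
    have h1 : (n+1) * n.choose i = (n+1).choose (i+1) * (i+1) := Nat.add_one_mul_choose_eq n i
    rw [← mul_pow, ← mul_pow, mul_comm ((i:ℕ)+1), ← h1]
  rw [Finset.sum_congr rfl h, ← Finset.mul_sum, S0 n]

lemma hA_nat (n : ℕ) : (2*n+1).choose n * (n+1) = (2*n).choose n * (2*n+1) := by
  have h1 := Nat.add_one_mul_choose_eq (2*n) n
  have h2 : (2*n+1).choose ((2*n+1) - (n+1)) = (2*n+1).choose (n+1) :=
    Nat.choose_symm (by omega)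
  have h3 : (2*n+1) - (n+1) = n := by omega
  rw [h3] at h2
  rw [h2]
  linarith

lemma hB_nat (n : ℕ) : (2*n+2).choose (n+1) * (n+1) = (2*n+2) * ((2*n+1).choose n) := by
  have h1 := Nat.add_one_mul_choose_eq (2*n+1) n
  linarith

lemma full_sum (n : ℕ) :
    ∑ i ∈ range (n+2), (((n:ℚ)+1) - 2*(i:ℚ))^2 * (((n+1).choose i : ℕ) : ℚ)^2
      = 2*((n:ℚ)+1)*(((2*n).choose n : ℕ) : ℚ) := by
  have q0 : (∑ i ∈ range (n+2), (((n+1).choose i : ℕ) : ℚ)^2)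
      = (((2*n+2).choose (n+1) : ℕ) : ℚ) := by
    have h0 := S0 (n+1)
    rw [show 2*(n+1) = 2*n+2 from by ring] at h0
    exact_mod_cast h0
  have q1 : (∑ i ∈ range (n+2), (i:ℚ) * (((n+1).choose i : ℕ) : ℚ)^2)
      = ((n:ℚ)+1) * (((2*n+1).choose n : ℕ) : ℚ) := by exact_mod_cast S1 n
  have q2 : (∑ i ∈ range (n+2), (i:ℚ)^2 * (((n+1).choose i : ℕ) : ℚ)^2)
      = ((n:ℚ)+1)^2 * (((2*n).choose n : ℕ) : ℚ) := by exact_mod_cast S2 n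
  have hAq : (((2*n+1).choose n : ℕ) : ℚ) * ((n:ℚ)+1)
      = (((2*n).choose n : ℕ) : ℚ) * (2*(n:ℚ)+1) := by exact_mod_cast hA_nat n
  have hBq : (((2*n+2).choose (n+1) : ℕ) : ℚ) * ((n:ℚ)+1)
      = (2*(n:ℚ)+2) * (((2*n+1).choose n : ℕ) : ℚ) := by exact_mod_cast hB_nat n
  have expand : ∑ i ∈ range (n+2), (((n:ℚ)+1) - 2*(i:ℚ))^2 * (((n+1).choose i : ℕ) : ℚ)^2
      = ∑ i ∈ range (n+2), (((n:ℚ)+1)^2 * (((n+1).choose i : ℕ) : ℚ)^2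
        - 4*((n:ℚ)+1) * ((i:ℚ) * (((n+1).choose i : ℕ) : ℚ)^2)
        + 4 * ((i:ℚ)^2 * (((n+1).choose i : ℕ) : ℚ)^2)) :=
    Finset.sum_congr rfl (fun i _ => by ring)
  rw [expand, Finset.sum_add_distrib, Finset.sum_sub_distrib, ← Finset.mul_sum,
    ← Finset.mul_sum, ← Finset.mul_sum, q0, q1, q2]
  linear_combination ((n:ℚ)+1) * hBq - 2*((n:ℚ)+1) * hAq

lemma half_sum (n : ℕ) :
    ∑ i ∈ Icc 1 (n/2), (((n:ℚ)+1) - 2*(i:ℚ))^2 * (((n+1).choose i : ℕ) : ℚ)^2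
      = ((n:ℚ)+1) * (((2*n).choose n : ℕ) : ℚ) - ((n:ℚ)+1)^2 := by
  set f : ℕ → ℚ := fun i => (((n:ℚ)+1) - 2*(i:ℚ))^2 * (((n+1).choose i : ℕ) : ℚ)^2 with hf
  have hsym : ∀ i, i ≤ n+1 → f (n+1-i) = f i := by
    intro i hi
    simp only [hf]
    rw [Nat.choose_symm hi, Nat.cast_sub hi]
    push_cast
    ring
  have hfull := full_sum n
  rw [Finset.sum_range_succ, Finset.sum_range_succ'] at hfull
  have hf0 : f 0 = ((n:ℚ)+1)^2 := by simp [hf]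
  have hftop : f (n+1) = ((n:ℚ)+1)^2 := by
    simp only [hf, Nat.choose_self]
    push_cast
    ring
  have hmid : ∑ i ∈ range n, f (i+1) = 2 * ∑ i ∈ range (n/2), f (i+1) := by
    rcases Nat.even_or_odd n with ⟨h, rfl⟩ | ⟨h, rfl⟩
    · rw [show (h+h)/2 = h from by omega, Finset.sum_range_add]
      have : ∑ i ∈ range h, f (h + i + 1) = ∑ i ∈ range h, f (i+1) := by
        have e1 : ∀ i ∈ range h, f (h + i + 1) = f (h - i) := by
          intro i hi
          have hi' : i < h := Finset.mem_range.mp hi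
          have := hsym (h + i + 1) (by omega)
          rw [show h + h + 1 - (h + i + 1) = h - i from by omega] at this
          exact this.symm
        rw [Finset.sum_congr rfl e1]
        have := Finset.sum_range_reflect (fun j => f (j+1)) h
        rw [← this]
        refine Finset.sum_congr rfl fun j hj => ?_
        have hj' : j < h := Finset.mem_range.mp hj
        congr 1
        omega
      rw [this]
      ring
    · rw [show (2*h+1)/2 = h from by omega, show 2*h+1 = h + (h+1) from by omega,
        Finset.sum_range_add]
      have : ∑ i ∈ range (h+1), f (h + i + 1) = ∑ i ∈ range h, f (i+1) := by
        rw [Finset.sum_range_succ']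
        have hz : f (h + 0 + 1) = 0 := by
          simp only [hf]
          have : ((2*h+1 : ℕ) : ℚ) + 1 - 2*((h + 0 + 1 : ℕ) : ℚ) = 0 := by
            push_cast; ring
          rw [this]
          ring
        rw [hz, add_zero]
        have e1 : ∀ i ∈ range h, f (h + (i+1) + 1) = f (h - i) := by
          intro i hi
          have hi' : i < h := Finset.mem_range.mp hi
          have := hsym (h + (i+1) + 1) (by omega)
          rw [show 2*h + 1 + 1 - (h + (i+1) + 1) = h - i from by omega] at this
          exact this.symm
        rw [Finset.sum_congr rfl e1]
        have := Finset.sum_range_reflect (fun j => f (j+1)) h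
        rw [← this]
        refine Finset.sum_congr rfl fun j hj => ?_
        have hj' : j < h := Finset.mem_range.mp hj
        congr 1
        omega
      rw [this]
      ring
  have hicc : ∑ i ∈ Icc 1 (n/2), f i = ∑ i ∈ range (n/2), f (i+1) := by
    rw [← Finset.Ico_add_one_right_eq_Icc, Finset.sum_Ico_eq_sum_range]
    refine Finset.sum_congr (by congr 1) fun i _ => by rw [add_comm]
  rw [hicc]
  rw [hmid] at hfull
  simp only [Nat.choose_self, Nat.choose_zero_right, Nat.cast_one, Nat.cast_zero, Nat.cast_add,
    one_pow, mul_one, mul_zero, sub_zero] at hfull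
  linarith

lemma half_sum' (m : ℕ) (hm : 2 ≤ m) :
    ∑ i ∈ Icc 1 ((m-1)/2), ((m:ℚ) - 2*(i:ℚ))^2 * ((m.choose i : ℕ) : ℚ)^2
      = (m:ℚ) * (((2*(m-1)).choose (m-1) : ℕ) : ℚ) - (m:ℚ)^2 := by
  obtain ⟨n, rfl⟩ : ∃ n, m = n + 1 := ⟨m - 1, by omega⟩
  simp only [Nat.add_sub_cancel]
  exact_mod_cast half_sum n

theorem type_D_leading_coefficient_identity (m : ℕ) (hm : 0 < m) :
    (2 : ℚ) ^ (m - 1) / (Nat.factorial m : ℚ) +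
      (2 : ℚ) ^ ((m : ℤ) - 2) / ((m : ℚ) ^ 2 * (Nat.factorial m : ℚ)) *
        ∑ i ∈ Finset.Icc 1 ((m - 1) / 2), ((m : ℚ) - 2 * (i : ℚ)) ^ 2 * (Nat.choose m i : ℚ) ^ 2 =
    (2 : ℚ) ^ ((m : ℤ) - 2) / (Nat.factorial m : ℚ) *
      ((Nat.choose (2 * (m - 1)) (m - 1) : ℚ) / (m : ℚ) + 1) := by
  rcases m with _ | _ | k
  · omega
  · norm_num
  · rw [half_sum' (k+1+1) (by omega)]
    have e1 : k + 1 + 1 - 1 = k + 1 := by omega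
    rw [e1]
    have e2 : ((k+1+1 : ℕ) : ℤ) - 2 = ((k : ℕ) : ℤ) := by push_cast; ring
    rw [e2, zpow_natCast]
    have hF : (Nat.factorial (k+1+1) : ℚ) ≠ 0 := by
      exact_mod_cast Nat.factorial_ne_zero (k+1+1)
    have hk2 : ((k+1+1 : ℕ) : ℚ) ≠ 0 := by positivity
    field_simp
    ring
end

section
/- In the Double Product Lemma, after clearing denominators, the numerator polynomial A(x̄, ȳ) changes sign under any transposition of two x-variables (and likewise two y-variables); consequently A is divisible by the Vandermonde products ∏_{k<l}(x_k − x_l) and ∏_{k<l}(y_k − y_l) in the polynomial ring k[x_1,…,x_r,y_1,…,y_r]. -/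
open Finset MvPolynomial

set_option linter.unusedSectionVars false
set_option maxHeartbeats 1000000

namespace DPLaux

variable {F : Type*} [Field F] {r : ℕ}

/-- Convert a product over ordered pairs to a double product. -/
lemma prod_filter_lt {M : Type*} [CommMonoid M] (f : Fin r → Fin r → M) :
    ∏ p ∈ (univ : Finset (Fin r × Fin r)).filter (fun p => p.1 < p.2), f p.1 p.2
      = ∏ i, ∏ j ∈ Ioi i, f i j := by
  rw [Finset.prod_sigma']
  refine Finset.prod_nbij' (fun p => ⟨p.1, p.2⟩) (fun p => (p.1, p.2)) ?_ ?_ ?_ ?_ ?_ <;>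
    simp [Finset.mem_sigma, Finset.mem_filter, Finset.mem_Ioi]

lemma vdm_sign (x : Fin r → F) {a b : Fin r} (hab : a ≠ b) :
    ∏ p ∈ (univ : Finset (Fin r × Fin r)).filter (fun p => p.1 < p.2),
        (x (Equiv.swap a b p.1) - x (Equiv.swap a b p.2))
      = - ∏ p ∈ (univ : Finset (Fin r × Fin r)).filter (fun p => p.1 < p.2),
        (x p.1 - x p.2) := by
  set S := (univ : Finset (Fin r × Fin r)).filter (fun p => p.1 < p.2) with hS
  have key : ∀ v : Fin r → F,
      Matrix.det (Matrix.vandermonde v) = (-1 : F) ^ S.card * ∏ p ∈ S, (v p.1 - v p.2) := by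
    intro v
    rw [Matrix.det_vandermonde, ← prod_filter_lt (fun i j => v j - v i)]
    rw [Finset.prod_congr rfl (fun p _ => show v p.2 - v p.1 = -1 * (v p.1 - v p.2) by ring),
      Finset.prod_mul_distrib, Finset.prod_const]
  have h1 := key (fun i => x (Equiv.swap a b i))
  have hsub : Matrix.vandermonde (fun i => x (Equiv.swap a b i))
      = (Matrix.vandermonde x).submatrix (Equiv.swap a b) id := rfl
  rw [hsub, Matrix.det_permute, Equiv.Perm.sign_swap hab] at h1
  have h2 := key x
  have hc : ((-1 : F) ^ S.card) ≠ 0 := pow_ne_zero _ (by norm_num)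
  apply mul_left_cancel₀ hc
  rw [← h1, h2]
  push_cast
  ring

lemma vdm_pair_sign_x (x y : Fin r → F) {a b : Fin r} (hab : a ≠ b) :
    ∏ p ∈ (univ : Finset (Fin r × Fin r)).filter (fun p => p.1 < p.2),
        ((x (Equiv.swap a b p.1) - x (Equiv.swap a b p.2)) * (y p.1 - y p.2))
      = - ∏ p ∈ (univ : Finset (Fin r × Fin r)).filter (fun p => p.1 < p.2),
        ((x p.1 - x p.2) * (y p.1 - y p.2)) := by
  rw [Finset.prod_mul_distrib, Finset.prod_mul_distrib, vdm_sign x hab]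
  ring

lemma vdm_pair_sign_y (x y : Fin r → F) {a b : Fin r} (hab : a ≠ b) :
    ∏ p ∈ (univ : Finset (Fin r × Fin r)).filter (fun p => p.1 < p.2),
        ((x p.1 - x p.2) * (y (Equiv.swap a b p.1) - y (Equiv.swap a b p.2)))
      = - ∏ p ∈ (univ : Finset (Fin r × Fin r)).filter (fun p => p.1 < p.2),
        ((x p.1 - x p.2) * (y p.1 - y p.2)) := by
  rw [Finset.prod_mul_distrib, Finset.prod_mul_distrib, vdm_sign y hab]
  ring

lemma erase_comp (e : Equiv.Perm (Fin r)) (f : Fin r → F) (l : Fin r) :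
    ∏ k ∈ univ.erase l, f (e k) = ∏ k ∈ univ.erase (e l), f k := by
  refine Finset.prod_equiv e ?_ ?_ <;> simp

lemma Pi_x (x y : Fin r → F) (e : Equiv.Perm (Fin r)) :
    ∏ p : Fin r × Fin r, (x (e p.1) + y p.2 + 2) = ∏ p : Fin r × Fin r, (x p.1 + y p.2 + 2) := by
  rw [Fintype.prod_prod_type (fun p => (x (e p.1) + y p.2 + 2)),
    Fintype.prod_prod_type (fun p => (x p.1 + y p.2 + 2))]
  exact Equiv.prod_comp e (fun a => ∏ b, (x a + y b + 2))

lemma Pi_y (x y : Fin r → F) (e : Equiv.Perm (Fin r)) :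
    ∏ p : Fin r × Fin r, (x p.1 + y (e p.2) + 2) = ∏ p : Fin r × Fin r, (x p.1 + y p.2 + 2) := by
  rw [Fintype.prod_prod_type (fun p => (x p.1 + y (e p.2) + 2)),
    Fintype.prod_prod_type (fun p => (x p.1 + y p.2 + 2))]
  exact Finset.prod_congr rfl fun a _ => Equiv.prod_comp e (fun b => x a + y b + 2)

lemma E_x (x y : Fin r → F) (e : Equiv.Perm (Fin r)) :
    ((∏ k, (x (e k) + 1) * (y k + 1))
      - (∑ l, (∏ k ∈ univ.erase l, (x (e k) + 1)) * (∏ k, (y k + 1)) *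
          (∏ k, (x (e l) + y k + 1) / (x (e l) + y k + 2)) *
          ∏ k ∈ univ.erase l, (x (e k) - x (e l) - 1) / (x (e k) - x (e l)))
      - ∑ l, (∏ k ∈ univ.erase l, (y k + 1)) * (∏ k, (x (e k) + 1)) *
          (∏ k, (y l + x (e k) + 1) / (y l + x (e k) + 2)) *
          ∏ k ∈ univ.erase l, (y k - y l - 1) / (y k - y l))
    = ((∏ k, (x k + 1) * (y k + 1))
      - (∑ l, (∏ k ∈ univ.erase l, (x k + 1)) * (∏ k, (y k + 1)) *
          (∏ k, (x l + y k + 1) / (x l + y k + 2)) *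
          ∏ k ∈ univ.erase l, (x k - x l - 1) / (x k - x l))
      - ∑ l, (∏ k ∈ univ.erase l, (y k + 1)) * (∏ k, (x k + 1)) *
          (∏ k, (y l + x k + 1) / (y l + x k + 2)) *
          ∏ k ∈ univ.erase l, (y k - y l - 1) / (y k - y l)) := by
  congr 1
  · congr 1
    · rw [Finset.prod_mul_distrib, Finset.prod_mul_distrib,
        Equiv.prod_comp e (fun k => x k + 1)]
    · refine (Finset.sum_congr rfl fun l _ => ?_).trans
        (Equiv.sum_comp e (fun l => (∏ k ∈ univ.erase l, (x k + 1)) * (∏ k, (y k + 1)) *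
          (∏ k, (x l + y k + 1) / (x l + y k + 2)) *
          ∏ k ∈ univ.erase l, (x k - x l - 1) / (x k - x l)))
      rw [erase_comp e (fun k => x k + 1) l,
        erase_comp e (fun k => (x k - x (e l) - 1) / (x k - x (e l))) l]
  · refine Finset.sum_congr rfl fun l _ => ?_
    rw [Equiv.prod_comp e (fun k => x k + 1),
      Equiv.prod_comp e (fun k => (y l + x k + 1) / (y l + x k + 2))]

lemma E_y (x y : Fin r → F) (e : Equiv.Perm (Fin r)) :
    ((∏ k, (x k + 1) * (y (e k) + 1))
      - (∑ l, (∏ k ∈ univ.erase l, (x k + 1)) * (∏ k, (y (e k) + 1)) *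
          (∏ k, (x l + y (e k) + 1) / (x l + y (e k) + 2)) *
          ∏ k ∈ univ.erase l, (x k - x l - 1) / (x k - x l))
      - ∑ l, (∏ k ∈ univ.erase l, (y (e k) + 1)) * (∏ k, (x k + 1)) *
          (∏ k, (y (e l) + x k + 1) / (y (e l) + x k + 2)) *
          ∏ k ∈ univ.erase l, (y (e k) - y (e l) - 1) / (y (e k) - y (e l)))
    = ((∏ k, (x k + 1) * (y k + 1))
      - (∑ l, (∏ k ∈ univ.erase l, (x k + 1)) * (∏ k, (y k + 1)) *
          (∏ k, (x l + y k + 1) / (x l + y k + 2)) *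
          ∏ k ∈ univ.erase l, (x k - x l - 1) / (x k - x l))
      - ∑ l, (∏ k ∈ univ.erase l, (y k + 1)) * (∏ k, (x k + 1)) *
          (∏ k, (y l + x k + 1) / (y l + x k + 2)) *
          ∏ k ∈ univ.erase l, (y k - y l - 1) / (y k - y l)) := by
  congr 1
  · congr 1
    · rw [Finset.prod_mul_distrib, Finset.prod_mul_distrib,
        Equiv.prod_comp e (fun k => y k + 1)]
    · refine Finset.sum_congr rfl fun l _ => ?_
      rw [Equiv.prod_comp e (fun k => y k + 1),
        Equiv.prod_comp e (fun k => (x l + y k + 1) / (x l + y k + 2))]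
  · refine (Finset.sum_congr rfl fun l _ => ?_).trans
      (Equiv.sum_comp e (fun l => (∏ k ∈ univ.erase l, (y k + 1)) * (∏ k, (x k + 1)) *
        (∏ k, (y l + x k + 1) / (y l + x k + 2)) *
        ∏ k ∈ univ.erase l, (y k - y l - 1) / (y k - y l)))
    rw [erase_comp e (fun k => y k + 1) l,
      erase_comp e (fun k => (y k - y (e l) - 1) / (y k - y (e l))) l]

/-- `X i` is prime in a multivariate polynomial ring over a domain. -/
lemma prime_X' {R σ : Type*} [CommRing R] [IsDomain R] (i : σ) :
    Prime (X i : MvPolynomial σ R) := by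
  classical
  let e : σ ≃ Option {b // b ≠ i} := (Equiv.optionSubtypeNe i).symm
  rw [← MulEquiv.prime_iff (renameEquiv R e).toMulEquiv]
  have h1 : (renameEquiv R e).toMulEquiv (X i) = X (e i) := rename_X _ _
  have h2 : e i = none := Equiv.optionSubtypeNe_symm_self i
  rw [h1, h2, ← MulEquiv.prime_iff (optionEquivLeft R {b // b ≠ i}).toMulEquiv]
  have h3 : (optionEquivLeft R {b // b ≠ i}).toMulEquiv (X none) = Polynomial.X :=
    optionEquivLeft_X_none R _
  rw [h3]
  exact Polynomial.prime_X

/-- `X i - X j` is prime for `i ≠ j`. -/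
lemma prime_X_sub_X {R σ : Type*} [CommRing R] [IsDomain R] [DecidableEq σ] {i j : σ}
    (hij : i ≠ j) : Prime (X i - X j : MvPolynomial σ R) := by
  let φ : MvPolynomial σ R →ₐ[R] MvPolynomial σ R :=
    aeval (fun k => if k = i then X i + X j else X k)
  let ψ : MvPolynomial σ R →ₐ[R] MvPolynomial σ R :=
    aeval (fun k => if k = i then X i - X j else X k)
  have hφψ : φ.comp ψ = AlgHom.id R _ := by
    apply algHom_ext
    intro k
    by_cases hk : k = i <;>
      simp [φ, ψ, hk, hij.symm]
  have hψφ : ψ.comp φ = AlgHom.id R _ := by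
    apply algHom_ext
    intro k
    by_cases hk : k = i <;>
      simp [φ, ψ, hk, hij.symm]
  let E : MvPolynomial σ R ≃ₐ[R] MvPolynomial σ R := AlgEquiv.ofAlgHom ψ φ hψφ hφψ
  have : E.toMulEquiv (X i) = X i - X j := by
    simp [E, ψ]
  exact this ▸ ((MulEquiv.prime_iff E.toMulEquiv).mpr (prime_X' i))

/-- Substituting `X i` for `X j` changes a polynomial by a multiple of `X i - X j`. -/
lemma dvd_sub_aeval {R σ : Type*} [CommRing R] [DecidableEq σ] (i j : σ)
    (P : MvPolynomial σ R) :
    (X i - X j : MvPolynomial σ R) ∣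
      P - aeval (R := R) (fun k => if k = j then (X i : MvPolynomial σ R) else X k) P := by
  induction P using MvPolynomial.induction_on with
  | C a => simp
  | add p q hp hq =>
    have : p + q - aeval (R := R) (fun k => if k = j then (X i : MvPolynomial σ R) else X k) (p + q)
        = (p - aeval (R := R) (fun k => if k = j then (X i : MvPolynomial σ R) else X k) p)
          + (q - aeval (R := R) (fun k => if k = j then (X i : MvPolynomial σ R) else X k) q) := by
      rw [map_add]; ring
    rw [this]
    exact dvd_add hp hq
  | mul_X p m hp =>
    have : p * X m - aeval (R := R) (fun k => if k = j then (X i : MvPolynomial σ R) else X k) (p * X m)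
        = (p - aeval (R := R) (fun k => if k = j then (X i : MvPolynomial σ R) else X k) p) * X m
          + aeval (R := R) (fun k => if k = j then (X i : MvPolynomial σ R) else X k) p *
            ((X m : MvPolynomial σ R)
              - aeval (R := R) (fun k => if k = j then (X i : MvPolynomial σ R) else X k) (X m)) := by
      rw [map_mul]; ring
    rw [this]
    refine dvd_add (Dvd.dvd.mul_right hp _) (Dvd.dvd.mul_left ?_ _)
    by_cases hm : m = j
    · subst hm
      have h4 : (aeval (R := R) (fun k => if k = m then (X i : MvPolynomial σ R) else X k)) (X m)
          = X i := by simp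
      rw [h4]
      exact ⟨-1, by ring⟩
    · simp [aeval_X, hm]

/-- Product of pairwise non-associated primes each dividing `A` divides `A`. -/
lemma prod_primes_dvd {α ι : Type*} [CommMonoidWithZero α] [IsCancelMulZero α] (s : Finset ι) (f : ι → α)
    (A : α) :
    (∀ i ∈ s, Prime (f i)) → (∀ i ∈ s, ∀ j ∈ s, i ≠ j → ¬ f i ∣ f j) →
    (∀ i ∈ s, f i ∣ A) → (∏ i ∈ s, f i) ∣ A := by
  classical
  induction s using Finset.induction_on generalizing A with
  | empty => intro _ _ _; simp
  | @insert a t hat ih =>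
    intro hp hnd hd
    obtain ⟨B, hB⟩ := hd a (mem_insert_self a t)
    have hall : ∀ j ∈ t, f j ∣ B := by
      intro j hj
      have hja : j ≠ a := fun h => hat (h ▸ hj)
      have hdj : f j ∣ f a * B := hB ▸ hd j (mem_insert_of_mem hj)
      rcases (hp j (mem_insert_of_mem hj)).dvd_or_dvd hdj with h | h
      · exact absurd h (hnd j (mem_insert_of_mem hj) a (mem_insert_self a t) hja)
      · exact h
    have := ih B (fun i hi => hp i (mem_insert_of_mem hi))
      (fun i hi j hj hij => hnd i (mem_insert_of_mem hi) j (mem_insert_of_mem hj) hij) hall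
    rw [Finset.prod_insert hat, hB]
    exact mul_dvd_mul_left (f a) this

/-- Two distinct increasing pairs give non-associated linear forms. -/
lemma not_dvd_aux [CharZero F] (ι : Fin r → Fin r ⊕ Fin r)
    (hw : ∀ (v : Fin r → F) (k : Fin r),
      (Sum.elim v v : Fin r ⊕ Fin r → F) (ι k) = v k)
    {p q : Fin r × Fin r} (hp : p.1 < p.2) (hq : q.1 < q.2) (hpq : p ≠ q) :
    ¬ ((X (ι p.1) - X (ι p.2) : MvPolynomial (Fin r ⊕ Fin r) F) ∣ (X (ι q.1) - X (ι q.2))) := by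
  classical
  rintro ⟨c, hc⟩
  set v : Fin r → F := fun i => if i = p.1 ∨ i = p.2 then 0 else if i = q.1 then 1 else 2 with hv
  have heval := congrArg (eval (Sum.elim v v)) hc
  simp only [map_sub, map_mul, eval_X, hw] at heval
  have hp1 : v p.1 = 0 := by simp [hv]
  have hp2 : v p.2 = 0 := by simp [hv]
  rw [hp1, hp2] at heval
  have hzero : v q.1 - v q.2 = 0 := by rw [heval]; ring
  have hne : v q.1 ≠ v q.2 := by
    by_cases h1 : q.1 = p.1 ∨ q.1 = p.2 <;> by_cases h2 : q.2 = p.1 ∨ q.2 = p.2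
    · exfalso
      rcases h1 with h1 | h1 <;> rcases h2 with h2 | h2
      · rw [h1, h2] at hq; exact lt_irrefl _ hq
      · exact hpq (Prod.ext h1.symm h2.symm)
      · rw [h1, h2] at hq; exact lt_asymm hp hq
      · rw [h1, h2] at hq; exact lt_irrefl _ hq
    · simp [hv, h1, h2, hq.ne']
    · simp [hv, h1, h2]
    · simp [hv, h1, h2, hq.ne']
  exact hne (sub_eq_zero.mp hzero)

end DPLaux

open DPLaux

/-- In the Double Product Lemma, the numerator polynomial `A` obtained by putting the
right-hand side over the common denominator
`∏_{k<l}(x_k-x_l)(y_k-y_l) · ∏_{k,l}(x_k+y_l+2)` changes sign under any transposition of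
two `x`-variables (and of two `y`-variables); consequently it is divisible by both
Vandermonde products.  The variables `x_i` (resp. `y_i`) are encoded as
`X (Sum.inl i)` (resp. `X (Sum.inr i)`). -/
theorem double_product_numerator_alternating {F : Type*} [Field F] [CharZero F] (r : ℕ)
    (A : MvPolynomial (Fin r ⊕ Fin r) F)
    (hA : ∀ x y : Fin r → F, Function.Injective x → Function.Injective y →
      (∀ k l, x k + y l + 2 ≠ 0) →
      MvPolynomial.eval (Sum.elim x y) A =
        (∏ p ∈ (univ : Finset (Fin r × Fin r)).filter (fun p => p.1 < p.2),
            ((x p.1 - x p.2) * (y p.1 - y p.2))) *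
        (∏ p : Fin r × Fin r, (x p.1 + y p.2 + 2)) *
        ((∏ k, (x k + 1) * (y k + 1))
          - (∑ l, (∏ k ∈ univ.erase l, (x k + 1)) * (∏ k, (y k + 1)) *
              (∏ k, (x l + y k + 1) / (x l + y k + 2)) *
              ∏ k ∈ univ.erase l, (x k - x l - 1) / (x k - x l))
          - ∑ l, (∏ k ∈ univ.erase l, (y k + 1)) * (∏ k, (x k + 1)) *
              (∏ k, (y l + x k + 1) / (y l + x k + 2)) *
              ∏ k ∈ univ.erase l, (y k - y l - 1) / (y k - y l))) :
    (∀ a b : Fin r, a ≠ b →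
        MvPolynomial.rename (Sum.map (⇑(Equiv.swap a b)) id) A = -A) ∧
    (∀ a b : Fin r, a ≠ b →
        MvPolynomial.rename (Sum.map id (⇑(Equiv.swap a b))) A = -A) ∧
    ((∏ p ∈ (univ : Finset (Fin r × Fin r)).filter (fun p => p.1 < p.2),
        (X (Sum.inl p.1) - X (Sum.inl p.2)) : MvPolynomial (Fin r ⊕ Fin r) F) ∣ A) ∧
    ((∏ p ∈ (univ : Finset (Fin r × Fin r)).filter (fun p => p.1 < p.2),
        (X (Sum.inr p.1) - X (Sum.inr p.2)) : MvPolynomial (Fin r ⊕ Fin r) F) ∣ A) := by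
  classical
  set S : Finset (Fin r × Fin r) :=
    (univ : Finset (Fin r × Fin r)).filter (fun p => p.1 < p.2) with hSdef
  -- the denominator-clearing polynomial
  set g : MvPolynomial (Fin r ⊕ Fin r) F :=
    (∏ p ∈ S, (X (Sum.inl p.1) - X (Sum.inl p.2))) *
    (∏ p ∈ S, (X (Sum.inr p.1) - X (Sum.inr p.2))) *
    (∏ p : Fin r × Fin r, (X (Sum.inl p.1) + X (Sum.inr p.2) + 2)) with hgdef
  have hval : ∀ z : Fin r ⊕ Fin r → F, eval z g =
      (∏ p ∈ S, (z (Sum.inl p.1) - z (Sum.inl p.2))) *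
      (∏ p ∈ S, (z (Sum.inr p.1) - z (Sum.inr p.2))) *
      (∏ p : Fin r × Fin r, (z (Sum.inl p.1) + z (Sum.inr p.2) + 2)) := by
    intro z
    simp [hgdef]
  have hfac : ∀ (w : Fin r → F), (∏ p ∈ S, (w p.1 - w p.2)) ≠ 0 → Function.Injective w := by
    intro w hw k l hkl
    by_contra hne
    apply hw
    rcases Ne.lt_or_gt hne with h | h
    · exact Finset.prod_eq_zero (i := (k, l)) (by simp [hSdef, h]) (by simp [hkl])
    · exact Finset.prod_eq_zero (i := (l, k)) (by simp [hSdef, h]) (by simp [hkl])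
  have hgood : ∀ z : Fin r ⊕ Fin r → F, eval z g ≠ 0 →
      (Function.Injective fun k : Fin r => z (Sum.inl k)) ∧
      (Function.Injective fun k : Fin r => z (Sum.inr k)) ∧
      (∀ k l, z (Sum.inl k) + z (Sum.inr l) + 2 ≠ 0) := by
    intro z hz
    rw [hval z] at hz
    have h1 := mul_ne_zero_iff.mp hz
    have h2 := mul_ne_zero_iff.mp h1.1
    refine ⟨hfac _ h2.1, hfac _ h2.2, ?_⟩
    intro k l
    exact Finset.prod_ne_zero_iff.mp h1.2 (k, l) (mem_univ _)
  have hg0 : g ≠ 0 := by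
    intro h
    have hcast : Function.Injective (fun k : Fin r => ((k : ℕ) : F)) := by
      intro k l hkl
      exact Fin.val_injective (Nat.cast_injective hkl)
    have hz : eval (Sum.elim (fun k : Fin r => ((k : ℕ) : F))
        (fun k : Fin r => ((k : ℕ) : F))) g ≠ 0 := by
      rw [hval]
      refine mul_ne_zero (mul_ne_zero ?_ ?_) ?_ <;>
        refine Finset.prod_ne_zero_iff.mpr ?_
      · intro p hp
        simp only [hSdef, Finset.mem_filter] at hp
        exact sub_ne_zero_of_ne (fun hc => absurd (hcast hc) hp.2.ne)
      · intro p hp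
        simp only [hSdef, Finset.mem_filter] at hp
        exact sub_ne_zero_of_ne (fun hc => absurd (hcast hc) hp.2.ne)
      · intro p _
        simp only [Sum.elim_inl, Sum.elim_inr]
        intro hc
        have : (((p.1 : ℕ) + (p.2 : ℕ) + 2 : ℕ) : F) = 0 := by push_cast; linear_combination hc
        exact absurd (Nat.cast_eq_zero.mp this) (by omega)
    rw [h] at hz
    simp at hz
  have cancel : ∀ P : MvPolynomial (Fin r ⊕ Fin r) F,
      (∀ x y : Fin r → F, Function.Injective x → Function.Injective y →
        (∀ k l, x k + y l + 2 ≠ 0) → eval (Sum.elim x y) P = 0) → P = 0 := by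
    intro P hP
    have hPg : P * g = 0 := by
      apply MvPolynomial.funext
      intro z
      rw [map_mul, map_zero]
      by_cases hz : eval z g = 0
      · rw [hz, mul_zero]
      · obtain ⟨h1, h2, h3⟩ := hgood z hz
        have hz2 : z = Sum.elim (fun k => z (Sum.inl k)) (fun k => z (Sum.inr k)) := by
          funext s; cases s <;> rfl
        have hz' : eval z P = eval (Sum.elim (fun k => z (Sum.inl k))
            (fun k => z (Sum.inr k))) P := by
          rw [← hz2]
        rw [hz', hP _ _ h1 h2 h3, zero_mul]
    rcases mul_eq_zero.mp hPg with h | h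
    · exact h
    · exact absurd h hg0
  -- alternating in the x variables
  have alt1 : ∀ a b : Fin r, a ≠ b →
      MvPolynomial.rename (Sum.map (⇑(Equiv.swap a b)) id) A = -A := by
    intro a b hab
    have h0 : MvPolynomial.rename (Sum.map (⇑(Equiv.swap a b)) id) A + A = 0 := by
      apply cancel
      intro x y hx hy hxy
      rw [map_add]
      have hre : eval (Sum.elim x y) (MvPolynomial.rename (Sum.map (⇑(Equiv.swap a b)) id) A)
          = eval (Sum.elim (fun k => x (Equiv.swap a b k)) y) A := by
        rw [eval_rename]
        have hz2 : Sum.elim x y ∘ Sum.map (⇑(Equiv.swap a b)) id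
            = Sum.elim (fun k => x (Equiv.swap a b k)) y := by
          funext s; cases s <;> rfl
        rw [hz2]
      rw [hre, hA (fun k => x (Equiv.swap a b k)) y (hx.comp (Equiv.swap a b).injective) hy
          (fun k l => hxy (Equiv.swap a b k) l), hA x y hx hy hxy]
      rw [E_x x y (Equiv.swap a b), Pi_x x y (Equiv.swap a b), vdm_pair_sign_x x y hab]
      ring
    exact eq_neg_of_add_eq_zero_left h0
  -- alternating in the y variables
  have alt2 : ∀ a b : Fin r, a ≠ b →
      MvPolynomial.rename (Sum.map id (⇑(Equiv.swap a b))) A = -A := by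
    intro a b hab
    have h0 : MvPolynomial.rename (Sum.map id (⇑(Equiv.swap a b))) A + A = 0 := by
      apply cancel
      intro x y hx hy hxy
      rw [map_add]
      have hre : eval (Sum.elim x y) (MvPolynomial.rename (Sum.map id (⇑(Equiv.swap a b))) A)
          = eval (Sum.elim x (fun k => y (Equiv.swap a b k))) A := by
        rw [eval_rename]
        have hz2 : Sum.elim x y ∘ Sum.map id (⇑(Equiv.swap a b))
            = Sum.elim x (fun k => y (Equiv.swap a b k)) := by
          funext s; cases s <;> rfl
        rw [hz2]
      rw [hre, hA x (fun k => y (Equiv.swap a b k)) hx (hy.comp (Equiv.swap a b).injective)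
          (fun k l => hxy k (Equiv.swap a b l)), hA x y hx hy hxy]
      rw [E_y x y (Equiv.swap a b), Pi_y x y (Equiv.swap a b), vdm_pair_sign_y x y hab]
      ring
    exact eq_neg_of_add_eq_zero_left h0
  -- individual linear factors divide A (x side)
  have fac1 : ∀ p : Fin r × Fin r, p.1 < p.2 →
      ((X (Sum.inl p.1) - X (Sum.inl p.2) : MvPolynomial (Fin r ⊕ Fin r) F) ∣ A) := by
    intro p hplt
    have hTA : aeval (R := F) (fun k : Fin r ⊕ Fin r =>
        if k = Sum.inl p.2 then (X (Sum.inl p.1) : MvPolynomial (Fin r ⊕ Fin r) F) else X k) A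
        = 0 := by
      have hcomp : (aeval (R := F) (fun k : Fin r ⊕ Fin r =>
          if k = Sum.inl p.2 then (X (Sum.inl p.1) : MvPolynomial (Fin r ⊕ Fin r) F)
          else X k)).comp (MvPolynomial.rename (Sum.map (⇑(Equiv.swap p.1 p.2)) id))
          = aeval (R := F) (fun k : Fin r ⊕ Fin r =>
          if k = Sum.inl p.2 then (X (Sum.inl p.1) : MvPolynomial (Fin r ⊕ Fin r) F)
          else X k) := by
        apply algHom_ext
        intro k
        simp only [AlgHom.comp_apply, rename_X, aeval_X]
        cases k with
        | inr m => simp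
        | inl m =>
          rcases eq_or_ne m p.1 with rfl | h1
          · simp [Equiv.swap_apply_left, (ne_of_lt hplt)]
          · rcases eq_or_ne m p.2 with rfl | h2
            · simp [Equiv.swap_apply_right, (ne_of_lt hplt).symm]
            · simp [Equiv.swap_apply_of_ne_of_ne h1 h2]
      have h1 := DFunLike.congr_fun hcomp A
      rw [AlgHom.comp_apply, alt1 p.1 p.2 (ne_of_lt hplt), map_neg] at h1
      have h4 : (2 : MvPolynomial (Fin r ⊕ Fin r) F) *
          aeval (R := F) (fun k : Fin r ⊕ Fin r =>
          if k = Sum.inl p.2 then (X (Sum.inl p.1) : MvPolynomial (Fin r ⊕ Fin r) F)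
          else X k) A = 0 := by
        linear_combination -h1
      have h5 : (2 : MvPolynomial (Fin r ⊕ Fin r) F) ≠ 0 := two_ne_zero
      exact (mul_eq_zero.mp h4).resolve_left h5
    have hd := dvd_sub_aeval (R := F) (Sum.inl p.1) (Sum.inl p.2) A
    rw [hTA, sub_zero] at hd
    exact hd
  -- individual linear factors divide A (y side)
  have fac2 : ∀ p : Fin r × Fin r, p.1 < p.2 →
      ((X (Sum.inr p.1) - X (Sum.inr p.2) : MvPolynomial (Fin r ⊕ Fin r) F) ∣ A) := by
    intro p hplt
    have hTA : aeval (R := F) (fun k : Fin r ⊕ Fin r =>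
        if k = Sum.inr p.2 then (X (Sum.inr p.1) : MvPolynomial (Fin r ⊕ Fin r) F) else X k) A
        = 0 := by
      have hcomp : (aeval (R := F) (fun k : Fin r ⊕ Fin r =>
          if k = Sum.inr p.2 then (X (Sum.inr p.1) : MvPolynomial (Fin r ⊕ Fin r) F)
          else X k)).comp (MvPolynomial.rename (Sum.map id (⇑(Equiv.swap p.1 p.2))))
          = aeval (R := F) (fun k : Fin r ⊕ Fin r =>
          if k = Sum.inr p.2 then (X (Sum.inr p.1) : MvPolynomial (Fin r ⊕ Fin r) F)
          else X k) := by
        apply algHom_ext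
        intro k
        simp only [AlgHom.comp_apply, rename_X, aeval_X]
        cases k with
        | inl m => simp
        | inr m =>
          rcases eq_or_ne m p.1 with rfl | h1
          · simp [Equiv.swap_apply_left, (ne_of_lt hplt)]
          · rcases eq_or_ne m p.2 with rfl | h2
            · simp [Equiv.swap_apply_right, (ne_of_lt hplt).symm]
            · simp [Equiv.swap_apply_of_ne_of_ne h1 h2]
      have h1 := DFunLike.congr_fun hcomp A
      rw [AlgHom.comp_apply, alt2 p.1 p.2 (ne_of_lt hplt), map_neg] at h1
      have h4 : (2 : MvPolynomial (Fin r ⊕ Fin r) F) *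
          aeval (R := F) (fun k : Fin r ⊕ Fin r =>
          if k = Sum.inr p.2 then (X (Sum.inr p.1) : MvPolynomial (Fin r ⊕ Fin r) F)
          else X k) A = 0 := by
        linear_combination -h1
      have h5 : (2 : MvPolynomial (Fin r ⊕ Fin r) F) ≠ 0 := two_ne_zero
      exact (mul_eq_zero.mp h4).resolve_left h5
    have hd := dvd_sub_aeval (R := F) (Sum.inr p.1) (Sum.inr p.2) A
    rw [hTA, sub_zero] at hd
    exact hd
  refine ⟨alt1, alt2, ?_, ?_⟩
  · refine prod_primes_dvd S (fun p => X (Sum.inl p.1) - X (Sum.inl p.2)) A ?_ ?_ ?_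
    · intro p hp
      have hplt : p.1 < p.2 := (Finset.mem_filter.mp hp).2
      exact prime_X_sub_X (fun h => absurd (Sum.inl_injective h) hplt.ne)
    · intro p hp q hq hpq
      exact not_dvd_aux Sum.inl (fun v k => rfl)
        (Finset.mem_filter.mp hp).2 (Finset.mem_filter.mp hq).2 hpq
    · intro p hp
      exact fac1 p (Finset.mem_filter.mp hp).2
  · refine prod_primes_dvd S (fun p => X (Sum.inr p.1) - X (Sum.inr p.2)) A ?_ ?_ ?_
    · intro p hp
      have hplt : p.1 < p.2 := (Finset.mem_filter.mp hp).2
      exact prime_X_sub_X (fun h => absurd (Sum.inr_injective h) hplt.ne)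
    · intro p hp q hq hpq
      exact not_dvd_aux Sum.inr (fun v k => rfl)
        (Finset.mem_filter.mp hp).2 (Finset.mem_filter.mp hq).2 hpq
    · intro p hp
      exact fac2 p (Finset.mem_filter.mp hp).2
end

section
/- Substituting y_l = x_l − 1 for all l in the Double Sum Lemma yields the Sum Lemma: from ∑x_i + ∑y_j + r = (RHS of the double sum identity), one deduces x_1 + ⋯ + x_r = ∑_{l=1}^r x_l ∏_{j≠l} ((x_j − x_l + 1)(x_j + x_l)) / ((x_j − x_l)(x_j + x_l − 1)). -/
open Finset

/-- Substituting `y l = x l - 1` in the Double Sum Lemma yields the Sum Lemma. -/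
theorem sum_lemma_of_double_sum_lemma {F : Type*} [Field F] [CharZero F] (r : ℕ) (hr : 0 < r)
    (x : Fin r → F) (hx : Function.Injective x)
    (h1 : ∀ j l, j ≠ l → x j + x l ≠ 1) (h2 : ∀ l, 2 * x l ≠ 1)
    (hds : (∑ i, x i) + (∑ j, (x j - 1)) + (r : F) =
      (∑ t, x t * (∏ k ∈ univ.erase t, (x k - x t + 1) / (x k - x t)) *
          ∏ l, (x t + (x l - 1) + 1) / (x t + (x l - 1))) +
      ∑ m, (x m - 1) * (∏ k ∈ univ.erase m,
            ((x k - 1) - (x m - 1) + 1) / ((x k - 1) - (x m - 1))) *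
          ∏ l, (x l + (x m - 1) + 1) / (x l + (x m - 1))) :
    ∑ i, x i = ∑ l, x l * ∏ j ∈ univ.erase l,
      ((x j - x l + 1) * (x j + x l)) / ((x j - x l) * (x j + x l - 1)) := by
  -- LHS of hds equals 2 * ∑ x
  have hL : (∑ i, x i) + (∑ j, (x j - 1)) + (r : F) = 2 * ∑ i, x i := by
    rw [Finset.sum_sub_distrib]
    simp [Finset.card_univ]
    ring
  -- termwise identity on the RHS
  have key : ∀ t : Fin r,
      x t * (∏ k ∈ univ.erase t, (x k - x t + 1) / (x k - x t)) *
          (∏ l, (x t + (x l - 1) + 1) / (x t + (x l - 1))) +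
      (x t - 1) * (∏ k ∈ univ.erase t,
            ((x k - 1) - (x t - 1) + 1) / ((x k - 1) - (x t - 1))) *
          (∏ l, (x l + (x t - 1) + 1) / (x l + (x t - 1))) =
      2 * (x t * ∏ j ∈ univ.erase t,
        ((x j - x t + 1) * (x j + x t)) / ((x j - x t) * (x j + x t - 1))) := by
    intro t
    set A : F := ∏ k ∈ univ.erase t, (x k - x t + 1) / (x k - x t) with hA
    set P : F := ∏ l ∈ univ.erase t, (x t + x l) / (x t + x l - 1) with hP
    have hA2 : (∏ k ∈ univ.erase t,
        ((x k - 1) - (x t - 1) + 1) / ((x k - 1) - (x t - 1))) = A := by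
      refine Finset.prod_congr rfl fun k _ => ?_
      rw [show (x k - 1) - (x t - 1) + 1 = x k - x t + 1 by ring,
          show (x k - 1) - (x t - 1) = x k - x t by ring]
    have hQ1 : (∏ l, (x t + (x l - 1) + 1) / (x t + (x l - 1))) =
        (2 * x t) / (2 * x t - 1) * P := by
      have : (∏ l, (x t + (x l - 1) + 1) / (x t + (x l - 1))) =
          ∏ l, (x t + x l) / (x t + x l - 1) := by
        refine Finset.prod_congr rfl fun l _ => ?_
        rw [show x t + (x l - 1) + 1 = x t + x l by ring,
            show x t + (x l - 1) = x t + x l - 1 by ring]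
      rw [this, ← Finset.mul_prod_erase univ _ (mem_univ t)]
      rw [show x t + x t = 2 * x t by ring]
    have hQ2 : (∏ l, (x l + (x t - 1) + 1) / (x l + (x t - 1))) =
        (2 * x t) / (2 * x t - 1) * P := by
      have : (∏ l, (x l + (x t - 1) + 1) / (x l + (x t - 1))) =
          ∏ l, (x t + x l) / (x t + x l - 1) := by
        refine Finset.prod_congr rfl fun l _ => ?_
        rw [show x l + (x t - 1) + 1 = x t + x l by ring,
            show x l + (x t - 1) = x t + x l - 1 by ring]
      rw [this, ← Finset.mul_prod_erase univ _ (mem_univ t)]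
      rw [show x t + x t = 2 * x t by ring]
    have hAP : (∏ j ∈ univ.erase t,
        ((x j - x t + 1) * (x j + x t)) / ((x j - x t) * (x j + x t - 1))) = A * P := by
      rw [hA, hP, ← Finset.prod_mul_distrib]
      refine Finset.prod_congr rfl fun j _ => ?_
      rw [div_mul_div_comm]
      ring_nf
    rw [hA2, hQ1, hQ2, hAP]
    have h2t : 2 * x t - 1 ≠ 0 := sub_ne_zero.mpr (h2 t)
    have e : ∀ c : F, x t * A * (c * P) + (x t - 1) * A * (c * P) = (2 * x t - 1) * c * (A * P) := fun c => by ring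
    rw [e, mul_div_cancel₀ _ h2t]
    ring
  rw [hL] at hds
  rw [← Finset.sum_add_distrib] at hds
  have : (2 : F) * ∑ i, x i = 2 * ∑ l, x l * ∏ j ∈ univ.erase l,
      ((x j - x l + 1) * (x j + x l)) / ((x j - x l) * (x j + x l - 1)) := by
    rw [hds, Finset.mul_sum]
    exact Finset.sum_congr rfl fun t _ => key t
  exact mul_left_cancel₀ two_ne_zero this
end
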